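/- arXiv:1805.02136 — 3 statements merged into one kernel-verified Lean document; each statement's English description precedes it below -/
import Mathlib

section
/- Let ε > 0, δ > 0 and let L ≥ 2 be an integer with 2ε < δ ≤ 1/L. Then N*(ε,δ,L) ≤ ⌈log(1/(Lε))⌉ + 2L; that is, there exist a seed-space size 𝒴 and an (ε,δ,L)-private learner strategy of length ⌈log(1/(Lε))⌉ + 2L. -/
open Set

/-- A learner strategy of length `N` with seed space `Fin Y` (representing `{1,…,𝒴}`):
query functions mapping previous responses and the seed to a query in `[0,1)`,
and an estimation function mapping all responses and the seed to an estimate in `[0,1)`. -/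
structure Strategy (N Y : ℕ) where
  query : (k : Fin N) → (Fin (k : ℕ) → Bool) → Fin Y → ℝ
  estimate : (Fin N → Bool) → Fin Y → ℝ
  query_mem : ∀ k h y, query k h y ∈ Set.Ico (0 : ℝ) 1
  estimate_mem : ∀ r y, estimate r y ∈ Set.Ico (0 : ℝ) 1

namespace Strategy

variable {N Y : ℕ}

/-- The first `k` responses when the true value is `x` and the seed is `y`:
`r_k = 1` iff `x ≥ q_k`. -/
noncomputable def resps (φ : Strategy N Y) (x : ℝ) (y : Fin Y) : (k : ℕ) → Fin k → Bool
  | 0 => Fin.elim0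
  | k + 1 => fun i =>
      if h : (i : ℕ) < k then resps φ x y k ⟨i, h⟩
      else if hk : k < N then decide (φ.query ⟨k, hk⟩ (resps φ x y k) y ≤ x)
      else false

/-- The query sequence `q̄(x,y)`. -/
noncomputable def queries (φ : Strategy N Y) (x : ℝ) (y : Fin Y) : Fin N → ℝ :=
  fun k => φ.query k (resps φ x y (k : ℕ)) y

/-- The learner's estimate `x̂(x,y)`. -/
noncomputable def estim (φ : Strategy N Y) (x : ℝ) (y : Fin Y) : ℝ :=
  φ.estimate (resps φ x y N) y

/-- `Q(x)`: the set of query sequences that can arise when the true value is `x`. -/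
def Q (φ : Strategy N Y) (x : ℝ) : Set (Fin N → ℝ) :=
  {q | ∃ y : Fin Y, φ.queries x y = q}

/-- The information set `I(q̄)` of the adversary. -/
def infoSet (φ : Strategy N Y) (q : Fin N → ℝ) : Set ℝ :=
  {x | x ∈ Set.Ico (0 : ℝ) 1 ∧ q ∈ φ.Q x}

/-- The accuracy constraint with parameter `ε`. -/
def Accurate (ε : ℝ) (φ : Strategy N Y) : Prop :=
  ∀ x ∈ Set.Ico (0 : ℝ) 1, ∀ y : Fin Y, |φ.estim x y - x| ≤ ε / 2

end Strategy

/-- `E` is `(δ,L)`-coverable: `E` is contained in the union of `L` closed intervals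
of length at most `δ` each. -/
def Coverable (δ : ℝ) (L : ℕ) (E : Set ℝ) : Prop :=
  ∃ a b : Fin L → ℝ, (∀ j, b j - a j ≤ δ) ∧ E ⊆ ⋃ j, Set.Icc (a j) (b j)

/-- The `δ`-cover number `C_δ(E)`: the least positive `L` such that `E` is `(δ,L)`-coverable. -/
noncomputable def coverNumber (δ : ℝ) (E : Set ℝ) : ℕ :=
  sInf {L : ℕ | 0 < L ∧ Coverable δ L E}

/-- An `(ε,δ,L)`-private learner strategy. -/
def IsPrivate (ε δ : ℝ) (L : ℕ) {N Y : ℕ} (φ : Strategy N Y) : Prop :=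
  φ.Accurate ε ∧ ∀ x ∈ Set.Ico (0 : ℝ) 1, ∀ q ∈ φ.Q x, L ≤ coverNumber δ (φ.infoSet q)

/-- `N*(ε,δ,L)`: the least length for which an `(ε,δ,L)`-private strategy exists. -/
noncomputable def Nstar (ε δ : ℝ) (L : ℕ) : ℕ :=
  sInf {N : ℕ | ∃ Y : ℕ, 0 < Y ∧ ∃ φ : Strategy N Y, IsPrivate ε δ L φ}

open Finset

namespace PLaux

/-- partial dyadic sum of bits -/
noncomputable def loSum (b : ℕ → Bool) (m : ℕ) : ℝ :=
  ∑ i ∈ Finset.range m, if b i then (2:ℝ)⁻¹ ^ (i+1) else 0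

lemma loSum_succ (b : ℕ → Bool) (m : ℕ) :
    loSum b (m+1) = loSum b m + if b m then (2:ℝ)⁻¹ ^ (m+1) else 0 :=
  Finset.sum_range_succ _ _

lemma loSum_nonneg (b : ℕ → Bool) (m : ℕ) : 0 ≤ loSum b m := by
  apply Finset.sum_nonneg
  intro i _
  split <;> positivity

lemma loSum_le (b : ℕ → Bool) (m : ℕ) : loSum b m ≤ 1 - (2:ℝ)⁻¹ ^ m := by
  induction m with
  | zero => simp [loSum]
  | succ m ih =>
      rw [loSum_succ]
      have h : ((2:ℝ)⁻¹) ^ (m+1) + (2:ℝ)⁻¹ ^ (m+1) = (2:ℝ)⁻¹ ^ m := by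
        rw [pow_succ]; ring
      have hp : (0:ℝ) < (2:ℝ)⁻¹ ^ (m+1) := by positivity
      split <;> nlinarith [ih]

lemma loSum_congr {b b' : ℕ → Bool} (m : ℕ) (h : ∀ i < m, b i = b' i) :
    loSum b m = loSum b' m := by
  apply Finset.sum_congr rfl
  intro i hi
  rw [h i (Finset.mem_range.mp hi)]

variable (L : ℕ) (ε : ℝ)

/-- Phase-1 (scan/pair) query positions: `pos1 (2j) = j/L`, `pos1 (2j+1) = j/L + ε`. -/
noncomputable def pos1 (n : ℕ) : ℝ := ((n / 2 : ℕ) : ℝ) / L + if n % 2 = 1 then ε else 0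

/-- Phase-2 query position in gap `g` after bit-prefix `b` of length `m`. -/
noncomputable def Pos (g : ℕ) (b : ℕ → Bool) (m : ℕ) : ℝ :=
  (g : ℝ) / L + ε + (1 / L - ε) * (loSum b m + (2:ℝ)⁻¹ ^ (m + 1))

/-- number of `true`s among the first `2L` responses -/
def Tcount (h : ℕ → Bool) : ℕ := ((Finset.range (2 * L)).filter (fun n => h n = true)).card

lemma Tcount_congr {h h' : ℕ → Bool} (hh : ∀ n < 2 * L, h n = h' n) :
    Tcount L h = Tcount L h' := by
  unfold Tcount
  congr 1
  apply Finset.filter_congr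
  intro n hn
  rw [hh n (Finset.mem_range.mp hn)]

lemma Tcount_le (h : ℕ → Bool) : Tcount L h ≤ 2 * L := by
  simpa [Tcount] using Finset.card_filter_le (Finset.range (2*L)) (fun n => h n = true)

/-- bisection `lo` values for true value `x` in gap `c` -/
noncomputable def loS (x : ℝ) (c : ℕ) : ℕ → ℝ
  | 0 => 0
  | m + 1 => loS x c m +
      if (c : ℝ) / L + ε + (1 / L - ε) * (loS x c m + (2:ℝ)⁻¹ ^ (m+1)) ≤ x then
        (2:ℝ)⁻¹ ^ (m+1) else 0

/-- bisection response bits for true value `x` in gap `c` -/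
noncomputable def bisB (x : ℝ) (c : ℕ) (m : ℕ) : Bool :=
  decide ((c : ℝ) / L + ε + (1 / L - ε) * (loS L ε x c m + (2:ℝ)⁻¹ ^ (m+1)) ≤ x)

lemma loS_eq_loSum (x : ℝ) (c : ℕ) (m : ℕ) : loS L ε x c m = loSum (bisB L ε x c) m := by
  induction m with
  | zero => simp [loS, loSum]
  | succ m ih =>
      rw [loSum_succ, ← ih]
      show loS L ε x c m + _ = _
      by_cases h : (c : ℝ) / L + ε + (1 / L - ε) * (loS L ε x c m + (2:ℝ)⁻¹ ^ (m+1)) ≤ x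
      · simp [bisB, h]
      · simp [bisB, h]

lemma bisB_eq_decide (x : ℝ) (c : ℕ) (m : ℕ) :
    bisB L ε x c m = decide (Pos L ε c (bisB L ε x c) m ≤ x) := by
  rw [bisB, loS_eq_loSum, Pos]

lemma bis_invariant (x : ℝ) (c : ℕ) (hglen : 0 < 1 / (L:ℝ) - ε)
    (hx1 : (c : ℝ) / L + ε ≤ x) (hx2 : x < ((c : ℝ) + 1) / L) (hL0 : (0:ℝ) < L) :
    ∀ m, (c : ℝ) / L + ε + (1 / L - ε) * loS L ε x c m ≤ x ∧
      x < (c : ℝ) / L + ε + (1 / L - ε) * (loS L ε x c m + (2:ℝ)⁻¹ ^ m) := by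
  intro m
  induction m with
  | zero =>
      constructor
      · simpa [loS] using hx1
      · simp only [loS, pow_zero]
        have : (c : ℝ) / L + ε + (1 / L - ε) * (0 + 1) = ((c:ℝ) + 1) / L := by
          field_simp; ring
        rw [this]; exact hx2
  | succ m ih =>
      have hpow : ((2:ℝ)⁻¹) ^ (m+1) + (2:ℝ)⁻¹ ^ (m+1) = (2:ℝ)⁻¹ ^ m := by
        rw [pow_succ]; ring
      show (c : ℝ) / L + ε + (1 / L - ε) * (loS L ε x c m + _) ≤ x ∧
        x < (c : ℝ) / L + ε + (1 / L - ε) * ((loS L ε x c m + _) + (2:ℝ)⁻¹ ^ (m+1))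
      by_cases h : (c : ℝ) / L + ε + (1 / L - ε) * (loS L ε x c m + (2:ℝ)⁻¹ ^ (m+1)) ≤ x
      · rw [if_pos h]
        refine ⟨h, ?_⟩
        have := ih.2
        nlinarith
      · rw [if_neg h]
        refine ⟨?_, ?_⟩
        · simpa using ih.1
        · push_neg at h
          simpa using h



section Strat

/-- seed decoding equivalence -/
noncomputable def seedEquiv (L M : ℕ) : Fin (L * 2 ^ M) ≃ Fin L × (Fin M → Bool) :=
  Fintype.equivOfCardEq (by simp)

noncomputable def dg (L M : ℕ) (y : Fin (L * 2 ^ M)) : ℕ := ((seedEquiv L M) y).1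

noncomputable def dp (L M : ℕ) (y : Fin (L * 2 ^ M)) (n : ℕ) : Bool :=
  if h : n < M then ((seedEquiv L M) y).2 ⟨n, h⟩ else false


/-- the query made at step `n` given seed-data `(g,p)` and response history `h` -/
noncomputable def stepQ (g : ℕ) (p : ℕ → Bool) (h : ℕ → Bool) (n : ℕ) : ℝ :=
  if n < 2 * L then pos1 L ε n
  else if Tcount L h % 2 = 1 then Pos L ε g p (n - 2 * L)
  else Pos L ε (min (L - 1) (Tcount L h / 2 - 1)) (fun i => h (2 * L + i)) (n - 2 * L)

lemma stepQ_congr (g : ℕ) (p : ℕ → Bool) {h h' : ℕ → Bool} {n : ℕ}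
    (hh : ∀ i < n, h i = h' i) : stepQ L ε g p h n = stepQ L ε g p h' n := by
  unfold stepQ
  by_cases hn : n < 2 * L
  · simp [hn]
  · push_neg at hn
    have hn2 : ¬ n < 2 * L := by omega
    have hT : Tcount L h = Tcount L h' :=
      Tcount_congr L (fun i hi => hh i (lt_of_lt_of_le hi hn))
    have hb : loSum (fun i => h (2 * L + i)) (n - 2*L) = loSum (fun i => h' (2 * L + i)) (n - 2*L) :=
      loSum_congr _ (fun i hi => hh (2*L+i) (by omega))
    rw [if_neg hn2, if_neg hn2, hT]
    by_cases hpar : Tcount L h' % 2 = 1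
    · rw [if_pos hpar, if_pos hpar]
    · rw [if_neg hpar, if_neg hpar]
      unfold Pos
      rw [hb]

variable (hL : 2 ≤ L) (hε : 0 < ε) (hεL : 2 * ε < 1 / (L : ℝ))

section
include hL hε hεL

set_option linter.unusedSectionVars false

lemma cast_le_sub_one {a : ℕ} (ha : a ≤ L - 1) : (a : ℝ) ≤ (L : ℝ) - 1 := by
  have : ((a : ℕ) : ℝ) ≤ ((L - 1 : ℕ) : ℝ) := by exact_mod_cast ha
  rw [Nat.cast_sub (by omega)] at this
  simpa using this

lemma pos1_mem {n : ℕ} (hn : n < 2 * L) : pos1 L ε n ∈ Set.Ico (0:ℝ) 1 := by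
  have hL0 : (0:ℝ) < L := by positivity
  have hεL' : ε < 1 / (L:ℝ) := by linarith
  have hjr : ((n / 2 : ℕ) : ℝ) ≤ (L : ℝ) - 1 := cast_le_sub_one L ε hL hε hεL (by omega)
  have hinv : (1 / (L:ℝ)) * L = 1 := by field_simp
  have h2 : ((n / 2 : ℕ) : ℝ) / L ≤ 1 - 1 / L := by
    rw [div_le_iff₀ hL0]
    nlinarith
  constructor
  · apply add_nonneg (by positivity)
    split <;> linarith
  · have hite : (if n % 2 = 1 then ε else 0) ≤ ε := by split <;> linarith
    unfold pos1
    linarith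

lemma Pos_mem {g m : ℕ} (b : ℕ → Bool) (hg : g ≤ L - 1) : Pos L ε g b m ∈ Set.Ico (0:ℝ) 1 := by
  have hL0 : (0:ℝ) < L := by positivity
  have hglen : (0:ℝ) < 1 / (L:ℝ) - ε := by linarith
  have hgr : (g : ℝ) ≤ (L : ℝ) - 1 := cast_le_sub_one L ε hL hε hεL hg
  have hs0 := loSum_nonneg b m
  have hs1 := loSum_le b m
  have hp : (0:ℝ) < (2:ℝ)⁻¹ ^ (m+1) := by positivity
  have hpe : ((2:ℝ)⁻¹) ^ (m+1) + (2:ℝ)⁻¹ ^ (m+1) = (2:ℝ)⁻¹ ^ m := by rw [pow_succ]; ring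
  have hq1 : loSum b m + (2:ℝ)⁻¹ ^ (m+1) < 1 := by nlinarith
  have hq0 : (0:ℝ) < loSum b m + (2:ℝ)⁻¹ ^ (m+1) := by linarith
  have hgplus : (g : ℝ)/L + ε + (1/(L:ℝ) - ε) ≤ 1 := by
    have h1 : ((g : ℝ) + 1) / L ≤ 1 := by
      rw [div_le_one hL0]; linarith
    have h2 : (g : ℝ)/L + ε + (1/(L:ℝ) - ε) = ((g:ℝ) + 1)/L := by ring
    linarith
  constructor
  · exact add_nonneg (add_nonneg (by positivity) hε.le)
      (mul_nonneg hglen.le hq0.le)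
  · unfold Pos
    nlinarith [mul_lt_mul_of_pos_left hq1 hglen]

end
variable (M : ℕ)

/-- estimation function on (extended) response strings -/
noncomputable def estF (h : ℕ → Bool) : ℝ :=
  if Tcount L h % 2 = 1 then ((Tcount L h / 2 : ℕ) : ℝ) / L + ε / 2
  else min (((min (L - 1) (Tcount L h / 2 - 1) : ℕ) : ℝ) / L + ε
        + (1 / L - ε) * loSum (fun i => h (2 * L + i)) M + ε / 2) (1 - ε / 2)

section
include hL hε hεL
set_option linter.unusedSectionVars false

lemma estF_mem (h : ℕ → Bool) : estF L ε M h ∈ Set.Ico (0:ℝ) 1 := by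
  have hL0 : (0:ℝ) < L := by positivity
  have hεL' : ε < 1 / (L:ℝ) := by linarith
  have hLinv : 1 / (L:ℝ) ≤ 1 / 2 := by
    apply div_le_div_of_nonneg_left (by norm_num) (by norm_num)
    exact_mod_cast hL
  have hinv : (1 / (L:ℝ)) * L = 1 := by field_simp
  unfold estF
  split
  · rename_i hodd
    have ht := Tcount_le L h
    have ht2 : Tcount L h / 2 ≤ L - 1 := by omega
    have hjr : ((Tcount L h / 2 : ℕ) : ℝ) ≤ (L : ℝ) - 1 := cast_le_sub_one L ε hL hε hεL ht2
    have h2 : ((Tcount L h / 2 : ℕ) : ℝ) / L ≤ 1 - 1 / L := by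
      rw [div_le_iff₀ hL0]; nlinarith
    constructor
    · positivity
    · linarith
  · constructor
    · apply le_min
      · have := loSum_nonneg (fun i => h (2 * L + i)) M
        have : (0:ℝ) ≤ (1 / L - ε) * loSum (fun i => h (2 * L + i)) M :=
          mul_nonneg (by linarith) this
        positivity
      · linarith
    · calc min _ _ ≤ 1 - ε/2 := min_le_right _ _
        _ < 1 := by linarith

end

section
include hL hε hεL
set_option linter.unusedSectionVars false

lemma dg_le (M : ℕ) (y : Fin (L * 2 ^ M)) : dg L M y ≤ L - 1 := by
  have := ((seedEquiv L M) y).1.isLt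
  unfold dg
  omega

lemma stepQ_mem {g : ℕ} (hg : g ≤ L - 1) (p q : ℕ → Bool) (n : ℕ) :
    stepQ L ε g p q n ∈ Set.Ico (0:ℝ) 1 := by
  unfold stepQ
  split
  · exact pos1_mem L ε hL hε hεL (by assumption)
  · split
    · exact Pos_mem L ε hL hε hεL p hg
    · exact Pos_mem L ε hL hε hεL _ (by omega)

end

/-- the private strategy -/
noncomputable def mkS (L M : ℕ) (ε : ℝ) (hL : 2 ≤ L) (hε : 0 < ε) (hεL : 2 * ε < 1 / (L : ℝ)) :
    Strategy (2 * L + M) (L * 2 ^ M) where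
  query k h y := stepQ L ε (dg L M y) (dp L M y)
    (fun n => if hn : n < (k : ℕ) then h ⟨n, hn⟩ else false) (k : ℕ)
  estimate r y := estF L ε M (fun n => if hn : n < 2 * L + M then r ⟨n, hn⟩ else false)
  query_mem := fun k h y =>
    stepQ_mem L ε hL hε hεL (dg_le L ε hL hε hεL M y) (dp L M y) _ (k : ℕ)
  estimate_mem := fun r y => estF_mem L ε hL hε hεL M _

/-- index of the subinterval of `x` -/
noncomputable def cX (x : ℝ) : ℕ := ⌊(L:ℝ) * x⌋₊

/-- count of `true` phase-1 responses for true value `x` -/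
noncomputable def TX (x : ℝ) : ℕ :=
  2 * cX L x + (if x < (cX L x : ℝ) / L + ε then 1 else 2)

/-- the actual responses generated when the true value is `x` and seed data is `(g,p)` -/
noncomputable def trueR (g : ℕ) (p : ℕ → Bool) (x : ℝ) (n : ℕ) : Bool :=
  if n < 2 * L then decide (pos1 L ε n ≤ x)
  else if x < (cX L x : ℝ) / L + ε then decide (Pos L ε g p (n - 2 * L) ≤ x)
  else bisB L ε x (cX L x) (n - 2 * L)

/-- the actual queries -/
noncomputable def QX (g : ℕ) (p : ℕ → Bool) (x : ℝ) (n : ℕ) : ℝ :=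
  if n < 2 * L then pos1 L ε n
  else if x < (cX L x : ℝ) / L + ε then Pos L ε g p (n - 2 * L)
  else Pos L ε (cX L x) (bisB L ε x (cX L x)) (n - 2 * L)

section
include hL hε hεL
set_option linter.unusedSectionVars false

variable {x : ℝ} (hx : x ∈ Set.Ico (0:ℝ) 1)
include hx

lemma cX_lt : cX L x < L := by
  have hL0 : (0:ℝ) < L := by positivity
  apply Nat.floor_lt (by nlinarith [hx.1]) |>.mpr
  nlinarith [hx.2]

lemma cX_le : (cX L x : ℝ) / L ≤ x := by
  have hL0 : (0:ℝ) < L := by positivity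
  rw [div_le_iff₀ hL0]
  have := Nat.floor_le (by nlinarith [hx.1] : (0:ℝ) ≤ (L:ℝ) * x)
  unfold cX
  linarith [this]

lemma lt_cX : x < ((cX L x : ℝ) + 1) / L := by
  have hL0 : (0:ℝ) < L := by positivity
  rw [lt_div_iff₀ hL0]
  have := Nat.lt_floor_add_one ((L:ℝ) * x)
  unfold cX
  linarith [this]

lemma pos1_le_iff {n : ℕ} (hn : n < 2 * L) : pos1 L ε n ≤ x ↔ n < TX L ε x := by
  have hL0 : (0:ℝ) < L := by positivity
  have hεL' : ε < 1 / (L:ℝ) := by linarith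
  have hinv : (1 / (L:ℝ)) * L = 1 := by field_simp
  set c := cX L x with hc
  have hcle : (c : ℝ) / L ≤ x := cX_le L ε hL hε hεL hx
  have hclt : x < ((c : ℝ) + 1) / L := lt_cX L ε hL hε hεL hx
  set j := n / 2 with hj
  have hcast : ∀ a b : ℕ, a ≤ b → (a:ℝ)/L ≤ (b:ℝ)/L := by
    intro a b hab
    have hab' : (a:ℝ) ≤ (b:ℝ) := by exact_mod_cast hab
    gcongr
  unfold pos1 TX
  rcases Nat.even_or_odd n with he | ho
  · have hn2 : n % 2 = 0 := Nat.even_iff.mp he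
    have hnj : n = 2 * j := by omega
    rw [if_neg (by omega)]
    have key : (j:ℝ)/L ≤ x ↔ j ≤ c := by
      constructor
      · intro hle
        by_contra hgt
        push_neg at hgt
        have : ((c:ℝ) + 1)/L ≤ (j:ℝ)/L := by
          have : ((c + 1 : ℕ):ℝ)/L ≤ (j:ℝ)/L := hcast _ _ (by omega)
          push_cast at this
          linarith
        linarith
      · intro hle
        calc (j:ℝ)/L ≤ (c:ℝ)/L := hcast _ _ hle
          _ ≤ x := hcle
    rw [add_zero]
    rw [key]
    split <;> omega
  · have hn2 : n % 2 = 1 := Nat.odd_iff.mp ho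
    have hnj : n = 2 * j + 1 := by omega
    rw [if_pos hn2]
    by_cases hlucky : x < (c : ℝ) / L + ε
    · rw [if_pos hlucky]
      have key : (j:ℝ)/L + ε ≤ x ↔ j + 1 ≤ c := by
        constructor
        · intro hle
          by_contra hgt
          push_neg at hgt
          have : (c:ℝ)/L ≤ (j:ℝ)/L := hcast _ _ (by omega)
          linarith
        · intro hle
          have h1 : ((j:ℝ) + 1)/L ≤ (c:ℝ)/L := by
            have := hcast (j+1) c hle
            push_cast at this
            linarith
          have h2 : (j:ℝ)/L + ε < ((j:ℝ)+1)/L := by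
            have : ((j:ℝ)+1)/L = (j:ℝ)/L + 1/L := by ring
            linarith [this]
          linarith
      rw [key]
      omega
    · rw [if_neg hlucky]
      push_neg at hlucky
      have key : (j:ℝ)/L + ε ≤ x ↔ j ≤ c := by
        constructor
        · intro hle
          by_contra hgt
          push_neg at hgt
          have h1 : ((c:ℝ) + 1)/L ≤ (j:ℝ)/L := by
            have := hcast (c+1) j (by omega)
            push_cast at this
            linarith
          linarith
        · intro hle
          have := hcast j c hle
          linarith
      rw [key]
      omega

lemma TX_le : TX L ε x ≤ 2 * L := by
  have := cX_lt L ε hL hε hεL hx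
  unfold TX
  split <;> omega

lemma Tcount_eq_TX {h : ℕ → Bool} (hh : ∀ n < 2 * L, h n = decide (pos1 L ε n ≤ x)) :
    Tcount L h = TX L ε x := by
  have hTle := TX_le L ε hL hε hεL hx
  unfold Tcount
  have : (Finset.range (2 * L)).filter (fun n => h n = true) = Finset.range (TX L ε x) := by
    ext n
    simp only [Finset.mem_filter, Finset.mem_range]
    constructor
    · rintro ⟨hn, hv⟩
      rw [hh n hn] at hv
      rw [decide_eq_true_iff] at hv
      exact (pos1_le_iff L ε hL hε hεL hx hn).mp hv
    · intro hn
      have hn2 : n < 2 * L := by omega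
      refine ⟨hn2, ?_⟩
      rw [hh n hn2, decide_eq_true_iff]
      exact (pos1_le_iff L ε hL hε hεL hx hn2).mpr hn
  rw [this, Finset.card_range]

end
section
include hL hε hεL
set_option linter.unusedSectionVars false

variable {x : ℝ} (hx : x ∈ Set.Ico (0:ℝ) 1)
include hx

lemma trueR_phase1 {g : ℕ} {p : ℕ → Bool} {n : ℕ} (hn : n < 2 * L) :
    trueR L ε g p x n = decide (pos1 L ε n ≤ x) := by
  unfold trueR
  rw [if_pos hn]

lemma stepQ_trueR (g : ℕ) (p : ℕ → Bool) (m : ℕ) :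
    stepQ L ε g p (trueR L ε g p x) m = QX L ε g p x m := by
  have hc := cX_lt L ε hL hε hεL hx
  by_cases hm : m < 2 * L
  · unfold stepQ QX
    rw [if_pos hm, if_pos hm]
  · have hT : Tcount L (trueR L ε g p x) = TX L ε x :=
      Tcount_eq_TX L ε hL hε hεL hx (fun n hn => trueR_phase1 L ε hL hε hεL hx hn)
    unfold stepQ QX
    rw [if_neg hm, if_neg hm, hT]
    by_cases hlucky : x < (cX L x : ℝ) / L + ε
    · have hTX : TX L ε x = 2 * cX L x + 1 := by unfold TX; rw [if_pos hlucky]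
      rw [if_pos (by omega), if_pos hlucky]
    · have hTX : TX L ε x = 2 * cX L x + 2 := by unfold TX; rw [if_neg hlucky]
      rw [if_neg (by omega), if_neg hlucky]
      have hmin : min (L - 1) (TX L ε x / 2 - 1) = cX L x := by omega
      rw [hmin]
      unfold Pos
      congr 1
      congr 1
      congr 1
      apply loSum_congr
      intro i hi
      unfold trueR
      rw [if_neg (by omega), if_neg hlucky]
      congr 1
      omega

lemma trueR_eq_decide (g : ℕ) (p : ℕ → Bool) (m : ℕ) :
    trueR L ε g p x m = decide (QX L ε g p x m ≤ x) := by
  by_cases hm : m < 2 * L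
  · unfold trueR QX
    rw [if_pos hm, if_pos hm]
  · by_cases hlucky : x < (cX L x : ℝ) / L + ε
    · unfold trueR QX
      rw [if_neg hm, if_neg hm, if_pos hlucky, if_pos hlucky]
    · unfold trueR QX
      rw [if_neg hm, if_neg hm, if_neg hlucky, if_neg hlucky]
      exact bisB_eq_decide L ε x (cX L x) (m - 2*L)

lemma resps_eq (y : Fin (L * 2 ^ M)) :
    ∀ m, m ≤ 2 * L + M → ∀ i : Fin m,
      (mkS L M ε hL hε hεL).resps x y m i = trueR L ε (dg L M y) (dp L M y) x i := by
  intro m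
  induction m with
  | zero => intro _ i; exact i.elim0
  | succ m ih =>
      intro hm i
      set φ := mkS L M ε hL hε hεL with hφ
      show φ.resps x y (m+1) i = _
      have hunf : φ.resps x y (m+1) i
          = (if h : (i:ℕ) < m then φ.resps x y m ⟨i, h⟩
             else if hk : m < 2*L+M then decide (φ.query ⟨m, hk⟩ (φ.resps x y m) y ≤ x)
             else false) := rfl
      rw [hunf]
      by_cases hi : (i : ℕ) < m
      · rw [dif_pos hi]
        exact ih (by omega) ⟨i, hi⟩
      · have hkN : m < 2 * L + M := by omega
        have him : (i : ℕ) = m := by omega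
        rw [dif_neg hi, dif_pos hkN]
        have hq : φ.query ⟨m, hkN⟩ (φ.resps x y m) y
            = stepQ L ε (dg L M y) (dp L M y)
              (fun n => if hn : n < m then φ.resps x y m ⟨n, hn⟩ else false) m := rfl
        have hcg : stepQ L ε (dg L M y) (dp L M y)
            (fun n => if hn : n < m then φ.resps x y m ⟨n, hn⟩ else false) m
            = stepQ L ε (dg L M y) (dp L M y) (trueR L ε (dg L M y) (dp L M y) x) m := by
          apply stepQ_congr
          intro j hj
          rw [dif_pos hj]
          exact ih (by omega) ⟨j, hj⟩
        rw [hq, hcg, stepQ_trueR L ε hL hε hεL hx, him]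
        exact (trueR_eq_decide L ε hL hε hεL hx _ _ m).symm

lemma queries_eq (y : Fin (L * 2 ^ M)) (k : Fin (2 * L + M)) :
    (mkS L M ε hL hε hεL).queries x y k = QX L ε (dg L M y) (dp L M y) x k := by
  set φ := mkS L M ε hL hε hεL with hφ
  show φ.query k (φ.resps x y (k:ℕ)) y = _
  have hq : φ.query k (φ.resps x y (k:ℕ)) y
      = stepQ L ε (dg L M y) (dp L M y)
        (fun n => if hn : n < (k:ℕ) then φ.resps x y (k:ℕ) ⟨n, hn⟩ else false) (k:ℕ) := rfl
  rw [hq]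
  have hcg : stepQ L ε (dg L M y) (dp L M y)
      (fun n => if hn : n < (k:ℕ) then φ.resps x y (k:ℕ) ⟨n, hn⟩ else false) (k:ℕ)
      = stepQ L ε (dg L M y) (dp L M y) (trueR L ε (dg L M y) (dp L M y) x) (k:ℕ) := by
    apply stepQ_congr
    intro j hj
    rw [dif_pos hj]
    exact resps_eq L ε hL hε hεL M hx y (k:ℕ) (le_of_lt k.isLt) ⟨j, hj⟩
  rw [hcg, stepQ_trueR L ε hL hε hεL hx]

lemma accurate_mkS (hM2 : (2:ℝ)⁻¹ ^ M ≤ (L:ℝ) * ε) (y : Fin (L * 2 ^ M)) :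
    |(mkS L M ε hL hε hεL).estim x y - x| ≤ ε / 2 := by
  have hL0 : (0:ℝ) < L := by positivity
  have hεL' : ε < 1 / (L:ℝ) := by linarith
  have hinv : (1 / (L:ℝ)) * L = 1 := by field_simp
  set φ := mkS L M ε hL hε hεL with hφ
  set g := dg L M y
  set p := dp L M y
  set c := cX L x with hc
  have hcl := cX_lt L ε hL hε hεL hx
  have hcle : (c : ℝ) / L ≤ x := cX_le L ε hL hε hεL hx
  have hclt : x < ((c : ℝ) + 1) / L := lt_cX L ε hL hε hεL hx
  have hest : φ.estim x y = estF L ε M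
      (fun n => if hn : n < 2 * L + M then φ.resps x y (2*L+M) ⟨n, hn⟩ else false) := rfl
  have hh : ∀ n < 2 * L + M,
      (fun n => if hn : n < 2 * L + M then φ.resps x y (2*L+M) ⟨n, hn⟩ else false) n
        = trueR L ε g p x n := by
    intro n hn
    show (if hn2 : n < 2*L+M then φ.resps x y (2*L+M) ⟨n, hn2⟩ else false) = _
    rw [dif_pos hn]
    exact resps_eq L ε hL hε hεL M hx y (2*L+M) le_rfl ⟨n, hn⟩
  set h : ℕ → Bool := fun n => if hn : n < 2 * L + M then φ.resps x y (2*L+M) ⟨n, hn⟩ else false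
  have hT : Tcount L h = TX L ε x := by
    apply Tcount_eq_TX L ε hL hε hεL hx
    intro n hn
    rw [hh n (by omega)]
    exact trueR_phase1 L ε hL hε hεL hx hn
  rw [hest]
  unfold estF
  rw [hT]
  by_cases hlucky : x < (c : ℝ) / L + ε
  · have hTX : TX L ε x = 2 * c + 1 := by unfold TX; rw [← hc, if_pos hlucky]
    rw [if_pos (by omega)]
    have hdiv : TX L ε x / 2 = c := by omega
    rw [hdiv]
    rw [abs_le]
    constructor <;> linarith
  · have hTX : TX L ε x = 2 * c + 2 := by unfold TX; rw [← hc, if_neg hlucky]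
    rw [if_neg (by omega)]
    have hmin : min (L - 1) (TX L ε x / 2 - 1) = c := by omega
    rw [hmin]
    have hbits : loSum (fun i => h (2 * L + i)) M = loS L ε x c M := by
      rw [loS_eq_loSum]
      apply loSum_congr
      intro i hi
      rw [hh (2*L+i) (by omega)]
      unfold trueR
      rw [if_neg (by omega), ← hc, if_neg hlucky]
      congr 1
      omega
    rw [hbits]
    push_neg at hlucky
    have hinvar := bis_invariant L ε x c (by linarith) hlucky hclt hL0 M
    set lo := (c:ℝ)/L + ε + (1/L - ε) * loS L ε x c M with hlo
    have hpw : (0:ℝ) ≤ (2:ℝ)⁻¹ ^ M := by positivity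
    have hcell : (1/(L:ℝ) - ε) * (2:ℝ)⁻¹ ^ M ≤ ε := by
      have h1 : (1/(L:ℝ) - ε) * (2:ℝ)⁻¹ ^ M ≤ (1/(L:ℝ)) * (2:ℝ)⁻¹ ^ M := by nlinarith
      have h2 : (1/(L:ℝ)) * (2:ℝ)⁻¹ ^ M ≤ (1/(L:ℝ)) * ((L:ℝ) * ε) := by
        apply mul_le_mul_of_nonneg_left hM2 (by positivity)
      calc (1/(L:ℝ) - ε) * (2:ℝ)⁻¹ ^ M ≤ (1/(L:ℝ)) * ((L:ℝ) * ε) := by linarith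
        _ = ε := by field_simp
    clear_value lo
    have hxlo : lo ≤ x := hinvar.1
    have hxhi : x < lo + ε := by
      have h2 := hinvar.2
      have hexp : (c:ℝ)/L + ε + (1/L - ε) * (loS L ε x c M + (2:ℝ)⁻¹ ^ M)
          = lo + (1/L - ε) * (2:ℝ)⁻¹ ^ M := by rw [hlo]; ring
      rw [hexp] at h2
      linarith
    rcases le_or_gt (lo + ε/2) (1 - ε/2) with hcase | hcase
    · rw [min_eq_left hcase, abs_le]
      exact ⟨by linarith, by linarith⟩
    · rw [min_eq_right hcase.le, abs_le]
      have hx2 := hx.2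
      exact ⟨by linarith, by linarith⟩

end

section
include hL hε hεL
set_option linter.unusedSectionVars false

lemma dg_symm (gf : Fin L) (pf : Fin M → Bool) :
    dg L M ((seedEquiv L M).symm (gf, pf)) = gf := by
  unfold dg
  rw [Equiv.apply_symm_apply]

lemma dp_symm (gf : Fin L) (pf : Fin M → Bool) {i : ℕ} (hi : i < M) :
    dp L M ((seedEquiv L M).symm (gf, pf)) i = pf ⟨i, hi⟩ := by
  unfold dp
  rw [Equiv.apply_symm_apply, dif_pos hi]

lemma pair_mem {j : ℕ} (hj : j < L) {x' : ℝ}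
    (h1 : (j:ℝ)/L ≤ x') (h2 : x' < (j:ℝ)/L + ε) : x' ∈ Set.Ico (0:ℝ) 1 := by
  have hL0 : (0:ℝ) < L := by positivity
  have hjr : (j : ℝ) ≤ (L : ℝ) - 1 := cast_le_sub_one L ε hL hε hεL (by omega)
  have hinv : (1 / (L:ℝ)) * L = 1 := by field_simp
  constructor
  · have : (0:ℝ) ≤ (j:ℝ)/L := by positivity
    linarith
  · have hjd : (j:ℝ)/L ≤ ((L:ℝ) - 1)/L := by gcongr
    have : ((L:ℝ) - 1)/L = 1 - 1/L := by field_simp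
    linarith

lemma cX_pair {j : ℕ} (hj : j < L) {x' : ℝ}
    (h1 : (j:ℝ)/L ≤ x') (h2 : x' < (j:ℝ)/L + ε) : cX L x' = j := by
  have hL0 : (0:ℝ) < L := by positivity
  have hLε : (L:ℝ) * ε < 1 := by
    have h0 := mul_lt_mul_of_pos_left hεL hL0
    have h3 : (L:ℝ) * (1/L) = 1 := by field_simp
    nlinarith
  have hx0 : (0:ℝ) ≤ x' := le_trans (by positivity) h1
  unfold cX
  rw [Nat.floor_eq_iff (mul_nonneg hL0.le hx0)]
  constructor
  · rw [div_le_iff₀ hL0] at h1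
    linarith
  · rw [← lt_div_iff₀' hL0]
    have : ((j:ℝ) + 1) / L = (j:ℝ)/L + 1/L := by ring
    have hε1 : ε < 1/(L:ℝ) := by linarith
    push_cast
    linarith

lemma queries_fake (g : ℕ) (hg : g < L) (b : ℕ → Bool) {j : ℕ} (hj : j < L) {x' : ℝ}
    (h1 : (j:ℝ)/L ≤ x') (h2 : x' < (j:ℝ)/L + ε) (k : Fin (2*L+M)) :
    (mkS L M ε hL hε hεL).queries x' ((seedEquiv L M).symm (⟨g, hg⟩, fun i => b i)) k
      = if (k:ℕ) < 2*L then pos1 L ε (k:ℕ) else Pos L ε g b ((k:ℕ) - 2*L) := by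
  have hx' : x' ∈ Set.Ico (0:ℝ) 1 := pair_mem L ε hL hε hεL hj h1 h2
  have hcx : cX L x' = j := cX_pair L ε hL hε hεL hj h1 h2
  have hlucky : x' < (cX L x' : ℝ)/L + ε := by rw [hcx]; exact h2
  set y' := (seedEquiv L M).symm (⟨g, hg⟩, fun i => b i) with hy'
  rw [queries_eq L ε hL hε hεL M hx' y' k]
  unfold QX
  by_cases hk : (k:ℕ) < 2*L
  · rw [if_pos hk, if_pos hk]
  · rw [if_neg hk, if_neg hk, if_pos hlucky]
    have hdg : dg L M y' = g := dg_symm L ε hL hε hεL M ⟨g, hg⟩ _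
    rw [hdg]
    unfold Pos
    congr 1
    congr 1
    congr 1
    apply loSum_congr
    intro i hi
    have hiM : i < M := by
      have := k.isLt
      omega
    rw [dp_symm L ε hL hε hεL M ⟨g, hg⟩ _ hiM]

variable {x : ℝ} (hx : x ∈ Set.Ico (0:ℝ) 1)
include hx

lemma queries_shape (y₀ : Fin (L * 2 ^ M)) :
    ∃ g, g < L ∧ ∃ b : ℕ → Bool, ∀ k : Fin (2*L+M),
      (mkS L M ε hL hε hεL).queries x y₀ k
        = if (k:ℕ) < 2*L then pos1 L ε (k:ℕ) else Pos L ε g b ((k:ℕ) - 2*L) := by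
  by_cases hlucky : x < (cX L x : ℝ)/L + ε
  · refine ⟨dg L M y₀, ?_, dp L M y₀, ?_⟩
    · have := ((seedEquiv L M) y₀).1.isLt
      unfold dg
      omega
    · intro k
      rw [queries_eq L ε hL hε hεL M hx y₀ k]
      unfold QX
      by_cases hk : (k:ℕ) < 2*L
      · rw [if_pos hk, if_pos hk]
      · rw [if_neg hk, if_neg hk, if_pos hlucky]
  · refine ⟨cX L x, cX_lt L ε hL hε hεL hx, bisB L ε x (cX L x), ?_⟩
    intro k
    rw [queries_eq L ε hL hε hεL M hx y₀ k]
    unfold QX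
    by_cases hk : (k:ℕ) < 2*L
    · rw [if_pos hk, if_pos hk]
    · rw [if_neg hk, if_neg hk, if_neg hlucky]

end

/-- lower bound on the cover number from well-separated points -/
lemma coverNumber_ge {δ : ℝ} (hδ : 0 < δ) {E : Set ℝ} (hE : E ⊆ Set.Ico (0:ℝ) 1)
    {L : ℕ} (ξ : Fin L → ℝ) (hmem : ∀ j, ξ j ∈ E)
    (hsep : ∀ j j', j ≠ j' → δ < |ξ j - ξ j'|) : L ≤ coverNumber δ E := by
  have hm0 : 0 < ⌈1/δ⌉₊ := Nat.ceil_pos.mpr (by positivity)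
  have hcov : Coverable δ (⌈1/δ⌉₊) E := by
    refine ⟨fun i => (i:ℝ) * δ, fun i => (i:ℝ) * δ + δ, fun i => by linarith, ?_⟩
    intro z hz
    have hz01 := hE hz
    have hzpos : 0 ≤ z / δ := div_nonneg hz01.1 hδ.le
    have hfl : (⌊z/δ⌋₊ : ℝ) ≤ z/δ := Nat.floor_le hzpos
    have hfl2 : z/δ < (⌊z/δ⌋₊ : ℝ) + 1 := Nat.lt_floor_add_one _
    have hflm : ⌊z/δ⌋₊ < ⌈1/δ⌉₊ := by
      have h1 : (⌊z/δ⌋₊ : ℝ) < 1/δ := by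
        have hz1 : z < 1 := hz01.2
        have : z/δ < 1/δ := by gcongr
        linarith
      have h2 : (1:ℝ)/δ ≤ (⌈1/δ⌉₊ : ℝ) := Nat.le_ceil _
      exact_mod_cast h1.trans_le h2
    refine Set.mem_iUnion.mpr ⟨⟨⌊z/δ⌋₊, hflm⟩, ?_⟩
    constructor
    · show (⌊z/δ⌋₊ : ℝ) * δ ≤ z
      rw [← le_div_iff₀ hδ]
      exact hfl
    · show z ≤ (⌊z/δ⌋₊ : ℝ) * δ + δ
      have : z/δ < (⌊z/δ⌋₊ : ℝ) + 1 := hfl2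
      rw [div_lt_iff₀ hδ] at this
      linarith
  have hne : {n : ℕ | 0 < n ∧ Coverable δ n E}.Nonempty := ⟨⌈1/δ⌉₊, hm0, hcov⟩
  apply le_csInf hne
  rintro n ⟨hn0, a, b, hlen, hsub⟩
  have hch : ∀ j : Fin L, ∃ i : Fin n, ξ j ∈ Set.Icc (a i) (b i) :=
    fun j => Set.mem_iUnion.mp (hsub (hmem j))
  choose f hf using hch
  have hinj : Function.Injective f := by
    intro j j' hjj
    by_contra hne
    have h1 := hf j
    have h2 := hf j'
    rw [hjj] at h1
    have habs : |ξ j - ξ j'| ≤ δ := by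
      rw [abs_le]
      have := hlen (f j')
      constructor <;> [linarith [h1.1, h2.2]; linarith [h1.2, h2.1]]
    exact absurd habs (not_le.mpr (hsep j j' hne))
  calc L = Fintype.card (Fin L) := (Fintype.card_fin L).symm
    _ ≤ Fintype.card (Fin n) := Fintype.card_le_of_injective f hinj
    _ = n := Fintype.card_fin n

section
include hL hε hεL
set_option linter.unusedSectionVars false

lemma private_mkS {δ : ℝ} (hδ0 : 0 < δ) (hδL : δ ≤ 1/(L:ℝ)) (hM2 : (2:ℝ)⁻¹ ^ M ≤ (L:ℝ) * ε) :
    IsPrivate ε δ L (mkS L M ε hL hε hεL) := by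
  have hL0 : (0:ℝ) < L := by positivity
  constructor
  · intro x hx y
    exact accurate_mkS L ε hL hε hεL M hx hM2 y
  · rintro x hx q ⟨y₀, hy₀⟩
    obtain ⟨g, hg, b, hshape⟩ := queries_shape L ε hL hε hεL M hx y₀
    set φ := mkS L M ε hL hε hεL with hφ
    have hE : φ.infoSet q ⊆ Set.Ico (0:ℝ) 1 := fun z hz => hz.1
    set ξ : Fin L → ℝ := fun j => ((j:ℕ):ℝ) * (1 + ε) / L with hξ
    have hξpair : ∀ j : Fin L, ((j:ℕ):ℝ)/L ≤ ξ j ∧ ξ j < ((j:ℕ):ℝ)/L + ε := by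
      intro j
      have hj1 : ((j:ℕ):ℝ) < (L:ℝ) := by exact_mod_cast j.isLt
      have hj0 : (0:ℝ) ≤ ((j:ℕ):ℝ) := by positivity
      have hsplit : ξ j = ((j:ℕ):ℝ)/L + ((j:ℕ):ℝ) * ε / L := by rw [hξ]; ring
      constructor
      · rw [hsplit]
        have : (0:ℝ) ≤ ((j:ℕ):ℝ) * ε / L := by positivity
        linarith
      · rw [hsplit]
        have : ((j:ℕ):ℝ) * ε / L < ε := by
          rw [div_lt_iff₀ hL0]
          nlinarith
        linarith
    have hmemξ : ∀ j : Fin L, ξ j ∈ φ.infoSet q := by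
      intro j
      have hp := hξpair j
      refine ⟨pair_mem L ε hL hε hεL j.isLt hp.1 hp.2, ?_⟩
      refine ⟨(seedEquiv L M).symm (⟨g, hg⟩, fun i => b i), ?_⟩
      funext k
      rw [queries_fake L ε hL hε hεL M g hg b j.isLt hp.1 hp.2 k, ← hy₀]
      exact (hshape k).symm
    have hsep : ∀ j j' : Fin L, j ≠ j' → δ < |ξ j - ξ j'| := by
      have key : ∀ a b : ℕ, a < b → δ < |((a:ℕ):ℝ) * (1 + ε) / L - ((b:ℕ):ℝ) * (1 + ε) / L| := by
        intro a b hab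
        have hba : (a:ℝ) + 1 ≤ (b:ℝ) := by exact_mod_cast hab
        have hgap : ((b:ℝ) * (1 + ε) / L - (a:ℝ) * (1 + ε) / L) ≥ (1 + ε) / L := by
          rw [ge_iff_le, div_le_iff₀ hL0]
          have : (b:ℝ) * (1 + ε) / L - (a:ℝ) * (1 + ε) / L = ((b:ℝ) - a) * (1 + ε) / L := by
            ring
          rw [this, div_mul_cancel₀ _ (ne_of_gt hL0)]
          nlinarith
        have hgap2 : 1/(L:ℝ) < (1 + ε) / L := by
          rw [div_lt_div_iff_of_pos_right hL0]
          linarith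
        have hneg : ((a:ℝ)) * (1 + ε) / L - ((b:ℝ)) * (1 + ε) / L < 0 := by linarith
        rw [abs_of_neg hneg]
        linarith
      intro j j' hjj
      rcases Nat.lt_or_ge (j:ℕ) (j':ℕ) with hlt | hge
      · exact key _ _ hlt
      · have hlt : (j':ℕ) < (j:ℕ) := by
          rcases Nat.lt_or_ge (j':ℕ) (j:ℕ) with h | h
          · exact h
          · exact absurd (Fin.val_injective (le_antisymm hge h)).symm hjj
        rw [abs_sub_comm]
        exact key _ _ hlt
    exact coverNumber_ge hδ0 hE ξ hmemξ hsep

end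
end Strat
end PLaux

open PLaux

/-- upper bound `N*(ε,δ,L) ≤ ⌈log₂(1/(Lε))⌉ + 2L`, witnessed by a private
strategy of exactly that length. -/
theorem private_learning_upper_bound (ε δ : ℝ) (L : ℕ) (hL : 2 ≤ L)
    (hε : 0 < ε) (hδ : 0 < δ) (h1 : 2 * ε < δ) (h2 : δ ≤ 1 / (L : ℝ)) :
    (Nstar ε δ L : ℤ) ≤ ⌈Real.logb 2 (1 / ((L : ℝ) * ε))⌉ + 2 * (L : ℤ) ∧
    ∃ (N Y : ℕ), 0 < Y ∧ (N : ℤ) = ⌈Real.logb 2 (1 / ((L : ℝ) * ε))⌉ + 2 * (L : ℤ) ∧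
      ∃ φ : Strategy N Y, IsPrivate ε δ L φ := by
  have hL0 : (0:ℝ) < L := by positivity
  have hεL : 2 * ε < 1 / (L:ℝ) := lt_of_lt_of_le h1 h2
  have hLε0 : 0 < (L:ℝ) * ε := by positivity
  have hLε : (L:ℝ) * ε < 1/2 := by
    have h0 := mul_lt_mul_of_pos_left hεL hL0
    have h3 : (L:ℝ) * (1/L) = 1 := by field_simp
    nlinarith
  set C := ⌈Real.logb 2 (1 / ((L : ℝ) * ε))⌉ with hC
  have hlogb : 1 < Real.logb 2 (1 / ((L:ℝ)*ε)) := by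
    have h2lt : (2:ℝ) < 1/((L:ℝ)*ε) := by
      rw [lt_div_iff₀ hLε0]; linarith
    calc (1:ℝ) = Real.logb 2 2 := (Real.logb_self_eq_one (b:=2) (by norm_num)).symm
      _ < _ := Real.logb_lt_logb (by norm_num) (by norm_num) h2lt
  have hC1 : 1 ≤ C := by
    have hcr : (1:ℝ) < (C:ℝ) := lt_of_lt_of_le hlogb (Int.le_ceil _)
    exact_mod_cast hcr.le
  set M := C.toNat with hM
  have hMC : (M:ℤ) = C := Int.toNat_of_nonneg (by omega)
  have hMR : Real.logb 2 (1/((L:ℝ)*ε)) ≤ (M:ℝ) := by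
    have h := Int.le_ceil (Real.logb 2 (1/((L:ℝ)*ε)))
    have hcast : ((M:ℕ):ℝ) = ((C:ℤ):ℝ) := by exact_mod_cast hMC
    rw [← hC] at h
    rw [hcast]
    exact h
  have hM2 : (2:ℝ)⁻¹ ^ M ≤ (L:ℝ) * ε := by
    have hpos : (0:ℝ) < 1/((L:ℝ)*ε) := by positivity
    have h1' : 1/((L:ℝ)*ε) = (2:ℝ) ^ (Real.logb 2 (1/((L:ℝ)*ε))) :=
      (Real.rpow_logb (by norm_num) (by norm_num) hpos).symm
    have h2' : (2:ℝ) ^ (Real.logb 2 (1/((L:ℝ)*ε))) ≤ (2:ℝ) ^ ((M:ℝ)) :=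
      Real.rpow_le_rpow_of_exponent_le (by norm_num) hMR
    have h3' : (2:ℝ) ^ ((M:ℝ)) = ((2:ℝ))^(M:ℕ) := Real.rpow_natCast 2 M
    have h4 : 1/((L:ℝ)*ε) ≤ (2:ℝ)^M := by
      rw [h1', ← h3']; exact h2'
    have h2M : (0:ℝ) < (2:ℝ)^M := by positivity
    rw [inv_pow, inv_le_comm₀ h2M hLε0]
    rw [← one_div]
    exact h4
  have hY : 0 < L * 2^M := by
    have : 0 < L := by omega
    positivity
  have hpriv : IsPrivate ε δ L (mkS L M ε hL hε hεL) :=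
    private_mkS L ε hL hε hεL M hδ h2 hM2
  have hNmem : (2*L + M) ∈ {N | ∃ Y, 0 < Y ∧ ∃ φ : Strategy N Y, IsPrivate ε δ L φ} :=
    ⟨L * 2^M, hY, mkS L M ε hL hε hεL, hpriv⟩
  have hNcast : ((2*L + M : ℕ) : ℤ) = C + 2 * (L:ℤ) := by push_cast; omega
  constructor
  · have hle : Nstar ε δ L ≤ 2*L + M := Nat.sInf_le hNmem
    calc (Nstar ε δ L : ℤ) ≤ ((2*L+M : ℕ):ℤ) := by exact_mod_cast hle
      _ = C + 2 * (L:ℤ) := hNcast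
  · exact ⟨2*L+M, L*2^M, hY, hNcast, mkS L M ε hL hε hεL, hpriv⟩
end

section
/- Let ε > 0, δ > 0 and let L ≥ 2 be an integer with 2ε < δ ≤ 1/L. Then N*(ε,δ,L) ≥ ⌈log(δ/ε)⌉ + 2L − 4; that is, every (ε,δ,L)-private learner strategy of length N has N ≥ ⌈log(δ/ε)⌉ + 2L − 4. -/
open Set

-- ===== Auxiliary development =====

namespace Strategy

variable {N Y : ℕ}

lemma resps_succ (φ : Strategy N Y) (x : ℝ) (y : Fin Y) (k : ℕ) (i : Fin (k+1)) :
    φ.resps x y (k+1) i =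
      if h : (i : ℕ) < k then φ.resps x y k ⟨i, h⟩
      else if hk : k < N then decide (φ.query ⟨k, hk⟩ (φ.resps x y k) y ≤ x)
      else false := by
  rfl

lemma resps_prefix (φ : Strategy N Y) (x : ℝ) (y : Fin Y) :
    ∀ (k m : ℕ) (hmk : m ≤ k) (i : ℕ) (him : i < m),
      φ.resps x y k ⟨i, him.trans_le hmk⟩ = φ.resps x y m ⟨i, him⟩ := by
  intro k
  induction k with
  | zero => intro m hmk i him; omega
  | succ k ih =>
      intro m hmk i him
      rcases Nat.eq_or_lt_of_le hmk with h | h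
      · subst h; rfl
      · have hm : m ≤ k := Nat.lt_succ_iff.mp h
        have hik : i < k := him.trans_le hm
        rw [resps_succ, dif_pos hik]
        exact ih m hm i him

lemma resps_congr (φ : Strategy N Y) (x x' : ℝ) (y : Fin Y) :
    ∀ (K : ℕ), K ≤ N →
      (∀ k : Fin N, (k : ℕ) < K → (φ.queries x y k ≤ x ↔ φ.queries x y k ≤ x')) →
      φ.resps x' y K = φ.resps x y K := by
  intro K
  induction K with
  | zero => intro _ _; funext i; exact i.elim0
  | succ K ih =>
      intro hK H
      have hK' : K ≤ N := by omega
      have hKN : K < N := hK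
      have hprev : φ.resps x' y K = φ.resps x y K :=
        ih hK' (fun k hk => H k (by omega))
      funext i
      rw [resps_succ, resps_succ]
      by_cases hik : (i : ℕ) < K
      · rw [dif_pos hik, dif_pos hik, hprev]
      · rw [dif_neg hik, dif_neg hik, dif_pos hKN, dif_pos hKN, hprev]
        have := H ⟨K, hKN⟩ (by simp)
        simp only [Strategy.queries] at this
        exact decide_eq_decide.mpr this.symm

lemma queries_congr (φ : Strategy N Y) (x x' : ℝ) (y : Fin Y)
    (H : ∀ k : Fin N, (φ.queries x y k ≤ x ↔ φ.queries x y k ≤ x')) :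
    φ.queries x' y = φ.queries x y := by
  funext k
  show φ.query k (φ.resps x' y (k : ℕ)) y = φ.query k (φ.resps x y (k : ℕ)) y
  rw [resps_congr φ x x' y (k : ℕ) k.2.le (fun k' hk' => H k')]

end Strategy

namespace Strategy

variable {N Y : ℕ} {ε : ℝ}

lemma width_le {φ : Strategy N Y} (hAcc : φ.Accurate ε) (y : Fin Y) {u v : ℝ}
    (hu : u ∈ Set.Ico (0:ℝ) 1) (hv : v ∈ Set.Ico (0:ℝ) 1)
    (h : φ.resps u y N = φ.resps v y N) : |u - v| ≤ ε := by
  have h1 := hAcc u hu y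
  have h2 := hAcc v hv y
  have he : φ.estim u y = φ.estim v y := by
    unfold Strategy.estim; rw [h]
  rw [he] at h1
  have := abs_sub_abs_le_abs_sub (φ.estim v y - u) (φ.estim v y - v)
  rw [abs_le] at h1 h2 ⊢
  constructor <;> linarith

lemma infoSet_perturb {φ : Strategy N Y} (hAcc : φ.Accurate ε) {qq : Fin N → ℝ} {z z' : ℝ}
    (hz : z ∈ φ.infoSet qq) (hz' : z' ∈ Set.Ico (0:ℝ) 1)
    (H : ∀ k, (qq k ≤ z ↔ qq k ≤ z')) : z' ∈ φ.infoSet qq ∧ |z - z'| ≤ ε := by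
  obtain ⟨hzI, y', hy'⟩ := hz
  have H' : ∀ k : Fin N, (φ.queries z y' k ≤ z ↔ φ.queries z y' k ≤ z') := by
    intro k; rw [hy']; exact H k
  have hr : φ.resps z' y' N = φ.resps z y' N :=
    φ.resps_congr z z' y' N le_rfl (fun k _ => H' k)
  have hq : φ.queries z' y' = φ.queries z y' := φ.queries_congr z z' y' H'
  refine ⟨⟨hz', y', by rw [hq, hy']⟩, ?_⟩
  exact width_le hAcc y' hzI hz' (by rw [hr])

lemma exists_query_above {φ : Strategy N Y} (hAcc : φ.Accurate ε) (hε : 0 < ε)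
    {qq : Fin N → ℝ} {z : ℝ} (hz : z ∈ φ.infoSet qq) (hlt : z + ε < 1) :
    ∃ k, z < qq k ∧ qq k ≤ z + ε := by
  by_contra hcon
  push_neg at hcon
  classical
  set T : Finset (Fin N) := Finset.univ.filter (fun k => z < qq k) with hT
  set S : Finset ℝ := insert (1:ℝ) (T.image qq) with hS
  have hSne : S.Nonempty := ⟨1, Finset.mem_insert_self _ _⟩
  set c : ℝ := S.min' hSne with hc
  have hcS : ∀ w ∈ S, z + ε < w := by
    intro w hw
    rcases Finset.mem_insert.mp hw with h | h
    · subst h; exact hlt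
    · obtain ⟨k, hk, rfl⟩ := Finset.mem_image.mp h
      have hk' : z < qq k := (Finset.mem_filter.mp hk).2
      exact hcon k hk'
  have hcgt : z + ε < c := hcS c (S.min'_mem hSne)
  have hc1 : c ≤ 1 := S.min'_le 1 (Finset.mem_insert_self _ _)
  have hz0 : (0:ℝ) ≤ z := hz.1.1
  set z' : ℝ := (z + ε + c) / 2 with hz'
  have hz'gt : z + ε < z' := by rw [hz']; linarith
  have hz'lt : z' < c := by rw [hz']; linarith
  have hz'mem : z' ∈ Set.Ico (0:ℝ) 1 := ⟨by rw [hz']; linarith, by linarith⟩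
  have H : ∀ k, (qq k ≤ z ↔ qq k ≤ z') := by
    intro k
    constructor
    · intro h; linarith
    · intro h
      by_contra hzq
      push_neg at hzq
      have hkT : k ∈ T := Finset.mem_filter.mpr ⟨Finset.mem_univ _, hzq⟩
      have : c ≤ qq k := S.min'_le _ (Finset.mem_insert_of_mem (Finset.mem_image_of_mem qq hkT))
      linarith
  have := (infoSet_perturb hAcc hz hz'mem H).2
  rw [abs_le] at this
  have := this.1
  linarith

lemma exists_query_below {φ : Strategy N Y} (hAcc : φ.Accurate ε) (hε : 0 < ε)
    {qq : Fin N → ℝ} {z : ℝ} (hz : z ∈ φ.infoSet qq) (hgt : 0 < z - ε) :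
    ∃ k, z - ε ≤ qq k ∧ qq k ≤ z := by
  by_contra hcon
  push_neg at hcon
  classical
  set T : Finset (Fin N) := Finset.univ.filter (fun k => qq k ≤ z) with hT
  set S : Finset ℝ := insert (0:ℝ) (T.image qq) with hS
  have hSne : S.Nonempty := ⟨0, Finset.mem_insert_self _ _⟩
  set c : ℝ := S.max' hSne with hc
  have hcS : ∀ w ∈ S, w < z - ε := by
    intro w hw
    rcases Finset.mem_insert.mp hw with h | h
    · subst h; exact hgt
    · obtain ⟨k, hk, rfl⟩ := Finset.mem_image.mp h
      have hk' : qq k ≤ z := (Finset.mem_filter.mp hk).2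
      by_contra hge
      push_neg at hge
      exact absurd hk' (by simpa using (hcon k hge))
  have hclt : c < z - ε := hcS c (S.max'_mem hSne)
  have hc0 : (0:ℝ) ≤ c := S.le_max' 0 (Finset.mem_insert_self _ _)
  have hz1 : z < 1 := hz.1.2
  set z' : ℝ := (c + (z - ε)) / 2 with hz'
  have hz'lt : z' < z - ε := by rw [hz']; linarith
  have hz'gt : c < z' := by rw [hz']; linarith
  have hz'mem : z' ∈ Set.Ico (0:ℝ) 1 := ⟨by linarith, by linarith⟩
  have H : ∀ k, (qq k ≤ z ↔ qq k ≤ z') := by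
    intro k
    constructor
    · intro h
      have hkT : k ∈ T := Finset.mem_filter.mpr ⟨Finset.mem_univ _, h⟩
      have : qq k ≤ c := S.le_max' _ (Finset.mem_insert_of_mem (Finset.mem_image_of_mem qq hkT))
      linarith
    · intro h; linarith
  have := (infoSet_perturb hAcc hz hz'mem H).2
  rw [abs_le] at this
  have := this.2
  linarith

end Strategy

namespace Strategy

variable {N Y : ℕ} {ε : ℝ}

open Finset in
lemma window_bound {φ : Strategy N Y} (hAcc : φ.Accurate ε) (hε : 0 < ε) (y₀ : Fin Y) :
    ∀ (j : ℕ) (a b : ℝ), 0 ≤ a → b ≤ 1 →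
      (∀ x ∈ Set.Ico a b,
        ((Finset.univ.filter fun k => a < φ.queries x y₀ k ∧ φ.queries x y₀ k < b).card ≤ j)) →
      b - a ≤ 2 ^ j * ε := by
  classical
  intro j
  induction j with
  | zero =>
      intro a b ha hb hcount
      rcases le_or_gt b a with hba | hab
      · have : (0:ℝ) < 2 ^ 0 * ε := by positivity
        linarith
      · -- no queries in (a,b) for any x; all of [a,b) has the same responses as a
        have haI : a ∈ Set.Ico a b := ⟨le_rfl, hab⟩
        have hT : ∀ k : Fin N, ¬ (a < φ.queries a y₀ k ∧ φ.queries a y₀ k < b) := by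
          intro k hk
          have h1 := hcount a haI
          have h2 : k ∈ Finset.univ.filter
              (fun k => a < φ.queries a y₀ k ∧ φ.queries a y₀ k < b) :=
            Finset.mem_filter.mpr ⟨Finset.mem_univ _, hk⟩
          have := Finset.card_pos.mpr ⟨k, h2⟩
          omega
        have hsame : ∀ x ∈ Set.Ico a b, |a - x| ≤ ε := by
          intro x hx
          have H : ∀ k : Fin N, (φ.queries a y₀ k ≤ a ↔ φ.queries a y₀ k ≤ x) := by
            intro k
            have := hT k
            rcases le_or_gt (φ.queries a y₀ k) a with h | h
            · constructor <;> intro _ <;> [exact le_trans h hx.1; exact h]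
            · have hbq : b ≤ φ.queries a y₀ k := by
                by_contra hq; push_neg at hq; exact this ⟨h, hq⟩
              constructor <;> intro h' <;> [linarith; linarith [hx.2]]
          have hxm : x ∈ Set.Ico (0:ℝ) 1 := ⟨le_trans ha hx.1, lt_of_lt_of_le hx.2 hb⟩
          have ham : a ∈ Set.Ico (0:ℝ) 1 := ⟨ha, lt_of_lt_of_le hab hb⟩
          have hr : φ.resps x y₀ N = φ.resps a y₀ N :=
            φ.resps_congr a x y₀ N le_rfl (fun k _ => H k)
          exact width_le hAcc y₀ ham hxm (by rw [hr])
        -- conclude b - a ≤ ε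
        by_contra hcon
        push_neg at hcon
        have hεlt : ε < b - a := by
          have : (2:ℝ)^0 * ε = ε := by ring
          linarith [this ▸ hcon]
        set x : ℝ := a + (ε + (b - a)) / 2 with hx
        have hx1 : x ∈ Set.Ico a b := by
          constructor
          · rw [hx]; linarith
          · rw [hx]; linarith
        have := hsame x hx1
        rw [abs_le] at this
        have := this.1
        rw [hx] at this
        linarith
  | succ j ih =>
      intro a b ha hb hcount
      rcases le_or_gt b a with hba | hab
      · have : (0:ℝ) < 2 ^ (j+1) * ε := by positivity
        linarith
      · have haI : a ∈ Set.Ico a b := ⟨le_rfl, hab⟩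
        set T : Finset (Fin N) :=
          Finset.univ.filter (fun k => a < φ.queries a y₀ k ∧ φ.queries a y₀ k < b) with hT
        rcases Finset.eq_empty_or_nonempty T with hTe | hTne
        · -- as in base case: b - a ≤ ε ≤ 2^(j+1) ε
          have hT' : ∀ k : Fin N, ¬ (a < φ.queries a y₀ k ∧ φ.queries a y₀ k < b) := by
            intro k hk
            have : k ∈ T := Finset.mem_filter.mpr ⟨Finset.mem_univ _, hk⟩
            rw [hTe] at this
            exact absurd this (Finset.notMem_empty _)
          have hsame : ∀ x ∈ Set.Ico a b, |a - x| ≤ ε := by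
            intro x hx
            have H : ∀ k : Fin N, (φ.queries a y₀ k ≤ a ↔ φ.queries a y₀ k ≤ x) := by
              intro k
              have := hT' k
              rcases le_or_gt (φ.queries a y₀ k) a with h | h
              · constructor <;> intro _ <;> [exact le_trans h hx.1; exact h]
              · have hbq : b ≤ φ.queries a y₀ k := by
                  by_contra hq; push_neg at hq; exact this ⟨h, hq⟩
                constructor <;> intro h' <;> [linarith; linarith [hx.2]]
            have hxm : x ∈ Set.Ico (0:ℝ) 1 := ⟨le_trans ha hx.1, lt_of_lt_of_le hx.2 hb⟩
            have ham : a ∈ Set.Ico (0:ℝ) 1 := ⟨ha, lt_of_lt_of_le hab hb⟩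
            have hr : φ.resps x y₀ N = φ.resps a y₀ N :=
              φ.resps_congr a x y₀ N le_rfl (fun k _ => H k)
            exact width_le hAcc y₀ ham hxm (by rw [hr])
          by_contra hcon
          push_neg at hcon
          have h2j : ε ≤ 2 ^ (j+1) * ε := by
            nlinarith [one_le_pow₀ (one_le_two : (1:ℝ) ≤ 2) (n := j+1)]
          have hεlt : ε < b - a := by linarith
          set x : ℝ := a + (ε + (b - a)) / 2 with hx
          have hx1 : x ∈ Set.Ico a b := by
            constructor
            · rw [hx]; linarith
            · rw [hx]; linarith
          have := hsame x hx1
          rw [abs_le] at this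
          have := this.1
          rw [hx] at this
          linarith
        · -- there is a first in-window query k*
          set k₀ : Fin N := T.min' hTne with hk₀
          set q₀ : ℝ := φ.queries a y₀ k₀ with hq₀
          have hq₀mem : a < q₀ ∧ q₀ < b :=
            (Finset.mem_filter.mp (T.min'_mem hTne)).2
          -- prefix agreement: every x ∈ [a,b) makes the same query at step k₀
          have hsame : ∀ x ∈ Set.Ico a b, φ.queries x y₀ k₀ = q₀ := by
            intro x hx
            have H : ∀ k : Fin N, (k : ℕ) < (k₀ : ℕ) →
                (φ.queries a y₀ k ≤ a ↔ φ.queries a y₀ k ≤ x) := by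
              intro k hk
              have hkT : k ∉ T := by
                intro hkT
                have := T.min'_le k hkT
                rw [← hk₀] at this
                have : (k₀ : ℕ) ≤ (k : ℕ) := this
                omega
              have hknot : ¬ (a < φ.queries a y₀ k ∧ φ.queries a y₀ k < b) := by
                intro hc
                exact hkT (Finset.mem_filter.mpr ⟨Finset.mem_univ _, hc⟩)
              rcases le_or_gt (φ.queries a y₀ k) a with h | h
              · constructor <;> intro _ <;> [exact le_trans h hx.1; exact h]
              · have hbq : b ≤ φ.queries a y₀ k := by
                  by_contra hq; push_neg at hq; exact hknot ⟨h, hq⟩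
                constructor <;> intro h' <;> [linarith; linarith [hx.2]]
            have hr : φ.resps x y₀ (k₀ : ℕ) = φ.resps a y₀ (k₀ : ℕ) :=
              φ.resps_congr a x y₀ (k₀ : ℕ) k₀.2.le
                (fun k hk => H k hk)
            show φ.query k₀ (φ.resps x y₀ (k₀ : ℕ)) y₀ = q₀
            rw [hr]; rfl
          -- left interval [a, q₀)
          have hleft : q₀ - a ≤ 2 ^ j * ε := by
            apply ih a q₀ ha (le_of_lt (lt_of_lt_of_le hq₀mem.2 hb))
            intro x hx
            have hxb : x ∈ Set.Ico a b := ⟨hx.1, lt_trans hx.2 hq₀mem.2⟩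
            have hsub : (Finset.univ.filter
                (fun k => a < φ.queries x y₀ k ∧ φ.queries x y₀ k < q₀)) ⊆
                (Finset.univ.filter
                (fun k => a < φ.queries x y₀ k ∧ φ.queries x y₀ k < b)).erase k₀ := by
              intro k hk
              have hk' := (Finset.mem_filter.mp hk).2
              refine Finset.mem_erase.mpr ⟨?_, Finset.mem_filter.mpr
                ⟨Finset.mem_univ _, hk'.1, lt_trans hk'.2 hq₀mem.2⟩⟩
              intro hkk
              subst hkk
              rw [hsame x hxb] at hk'
              exact absurd hk'.2 (lt_irrefl _)
            have hk₀mem : k₀ ∈ (Finset.univ.filter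
                (fun k => a < φ.queries x y₀ k ∧ φ.queries x y₀ k < b)) := by
              refine Finset.mem_filter.mpr ⟨Finset.mem_univ _, ?_⟩
              rw [hsame x hxb]
              exact hq₀mem
            have h1 := Finset.card_le_card hsub
            have h2 := Finset.card_erase_of_mem hk₀mem
            have h3 := hcount x hxb
            omega
          -- right interval [q₀, b)
          have hright : b - q₀ ≤ 2 ^ j * ε := by
            apply ih q₀ b (le_trans ha hq₀mem.1.le) hb
            intro x hx
            have hxb : x ∈ Set.Ico a b := ⟨le_trans hq₀mem.1.le hx.1, hx.2⟩
            have hsub : (Finset.univ.filter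
                (fun k => q₀ < φ.queries x y₀ k ∧ φ.queries x y₀ k < b)) ⊆
                (Finset.univ.filter
                (fun k => a < φ.queries x y₀ k ∧ φ.queries x y₀ k < b)).erase k₀ := by
              intro k hk
              have hk' := (Finset.mem_filter.mp hk).2
              refine Finset.mem_erase.mpr ⟨?_, Finset.mem_filter.mpr
                ⟨Finset.mem_univ _, lt_trans hq₀mem.1 hk'.1, hk'.2⟩⟩
              intro hkk
              subst hkk
              rw [hsame x hxb] at hk'
              exact absurd hk'.1 (lt_irrefl _)
            have hk₀mem : k₀ ∈ (Finset.univ.filter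
                (fun k => a < φ.queries x y₀ k ∧ φ.queries x y₀ k < b)) := by
              refine Finset.mem_filter.mpr ⟨Finset.mem_univ _, ?_⟩
              rw [hsame x hxb]
              exact hq₀mem
            have h1 := Finset.card_le_card hsub
            have h2 := Finset.card_erase_of_mem hk₀mem
            have h3 := hcount x hxb
            omega
          have : (2:ℝ) ^ (j+1) * ε = 2 ^ j * ε + 2 ^ j * ε := by ring
          linarith

end Strategy

section Cover

variable {δ : ℝ}

lemma coverable_mono_num (hδ : 0 < δ) {s t : ℕ} (hst : s ≤ t) {E : Set ℝ}
    (h : Coverable δ s E) : Coverable δ t E := by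
  obtain ⟨a, b, hab, hsub⟩ := h
  refine ⟨fun j => if h : (j:ℕ) < s then a ⟨j, h⟩ else 0,
          fun j => if h : (j:ℕ) < s then b ⟨j, h⟩ else 0, ?_, ?_⟩
  · intro j
    by_cases h : (j:ℕ) < s
    · simpa [h] using hab ⟨j, h⟩
    · simp [h, hδ.le]
  · intro x hx
    obtain ⟨i, hi⟩ := Set.mem_iUnion.mp (hsub hx)
    refine Set.mem_iUnion.mpr ⟨⟨i, lt_of_lt_of_le i.2 hst⟩, ?_⟩
    have hii : ((⟨(i:ℕ), lt_of_lt_of_le i.2 hst⟩ : Fin t) : ℕ) < s := i.2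
    simpa [hii] using hi

lemma coverable_union {s t : ℕ} {E F : Set ℝ}
    (hE : Coverable δ s E) (hF : Coverable δ t F) : Coverable δ (s + t) (E ∪ F) := by
  obtain ⟨a, b, hab, hsub⟩ := hE
  obtain ⟨c, d, hcd, hsub'⟩ := hF
  refine ⟨fun j => if h : (j:ℕ) < s then a ⟨j, h⟩ else c ⟨(j:ℕ) - s, by omega⟩,
          fun j => if h : (j:ℕ) < s then b ⟨j, h⟩ else d ⟨(j:ℕ) - s, by omega⟩, ?_, ?_⟩
  · intro j
    by_cases h : (j:ℕ) < s
    · simpa [h] using hab ⟨j, h⟩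
    · simpa [h] using hcd ⟨(j:ℕ) - s, by omega⟩
  · intro x hx
    rcases hx with hx | hx
    · obtain ⟨i, hi⟩ := Set.mem_iUnion.mp (hsub hx)
      refine Set.mem_iUnion.mpr ⟨⟨i, by omega⟩, ?_⟩
      have hii : ((⟨(i:ℕ), by omega⟩ : Fin (s+t)) : ℕ) < s := i.2
      simpa [hii] using hi
    · obtain ⟨i, hi⟩ := Set.mem_iUnion.mp (hsub' hx)
      refine Set.mem_iUnion.mpr ⟨⟨s + (i:ℕ), by omega⟩, ?_⟩
      have hii : ¬ ((⟨s + (i:ℕ), by omega⟩ : Fin (s+t)) : ℕ) < s := by simp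
      have hfix : ((⟨s + (i:ℕ), by omega⟩ : Fin (s+t)) : ℕ) - s = (i:ℕ) := by simp
      simp only [dif_neg hii, hfix]
      simpa using hi

lemma coverable_single {E : Set ℝ} {u : ℝ} (h : E ⊆ Set.Icc u (u + δ)) :
    Coverable δ 1 E := by
  refine ⟨fun _ => u, fun _ => u + δ, fun _ => by simp, ?_⟩
  intro x hx
  exact Set.mem_iUnion.mpr ⟨0, h hx⟩

lemma chain_exists {ε : ℝ} (hδε : 2 * ε < δ) (hε : 0 < ε) (S : Set ℝ) :
    ∀ (c : ℕ) (s : ℕ) (a : ℝ), Coverable δ s (S ∩ Set.Iic a) →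
      ¬ Coverable δ (s + c) S →
      ∃ z : Fin (c+1) → ℝ, (∀ i, z i ∈ S ∧ a < z i) ∧
        (∀ i j : Fin (c+1), i < j → z i + 2 * ε < z j) := by
  intro c
  induction c with
  | zero =>
      intro s a hcov hncov
      have hQ : (S ∩ Set.Ioi a).Nonempty := by
        by_contra hQ
        rw [Set.not_nonempty_iff_eq_empty] at hQ
        have hSsub : S = S ∩ Set.Iic a := by
          ext x
          constructor
          · intro hx
            refine ⟨hx, ?_⟩
            by_contra hxa
            exact absurd (Set.eq_empty_iff_forall_notMem.mp hQ x
              ⟨hx, Set.mem_Ioi.mpr (not_le.mp hxa)⟩) (fun h => h)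
          · exact fun hx => hx.1
        exact hncov (by rw [Nat.add_zero, hSsub]; exact hcov)
      obtain ⟨z₀, hz₀⟩ := hQ
      refine ⟨fun _ => z₀, fun _ => ⟨hz₀.1, hz₀.2⟩, fun i j hij => ?_⟩
      have hi := i.2
      have hj := j.2
      have := Fin.lt_iff_val_lt_val.mp hij
      omega
  | succ c ih =>
      intro s a hcov hncov
      have hQ : (S ∩ Set.Ioi a).Nonempty := by
        by_contra hQ
        rw [Set.not_nonempty_iff_eq_empty] at hQ
        have hSsub : S = S ∩ Set.Iic a := by
          ext x
          constructor
          · intro hx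
            refine ⟨hx, ?_⟩
            by_contra hxa
            exact absurd (Set.eq_empty_iff_forall_notMem.mp hQ x
              ⟨hx, Set.mem_Ioi.mpr (not_le.mp hxa)⟩) (fun h => h)
          · exact fun hx => hx.1
        exact hncov (coverable_mono_num (by linarith) (show s ≤ s + (c+1) by omega)
          (by rw [hSsub]; exact hcov))
      set Q : Set ℝ := S ∩ Set.Ioi a with hQdef
      have hQbdd : BddBelow Q := ⟨a, fun x hx => le_of_lt hx.2⟩
      set f : ℝ := sInf Q with hf
      have hρ : (0:ℝ) < (δ - 2*ε)/2 := by linarith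
      obtain ⟨z₀, hz₀Q, hz₀lt⟩ : ∃ z ∈ Q, z < f + (δ - 2*ε)/2 := by
        have : f < f + (δ - 2*ε)/2 := by linarith
        obtain ⟨w, hw, hw2⟩ := Real.lt_sInf_add_pos hQ hρ
        exact ⟨w, hw, hw2⟩
      have hfa : a ≤ f := le_csInf hQ (fun x hx => le_of_lt hx.2)
      -- cover up to f + δ with s+1 intervals
      have hcov' : Coverable δ (s+1) (S ∩ Set.Iic (f + δ)) := by
        have hsub : S ∩ Set.Iic (f + δ) ⊆ (S ∩ Set.Iic a) ∪ Set.Icc f (f + δ) := by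
          intro x hx
          rcases le_or_gt x a with h | h
          · exact Or.inl ⟨hx.1, h⟩
          · refine Or.inr ⟨?_, hx.2⟩
            exact csInf_le hQbdd ⟨hx.1, h⟩
        obtain ⟨aa, bb, habb, hsubb⟩ :=
          coverable_union hcov (coverable_single (le_refl (Set.Icc f (f + δ))))
        exact ⟨aa, bb, habb, fun x hx => hsubb (hsub hx)⟩
      have hncov' : ¬ Coverable δ ((s+1) + c) S := by
        have : (s+1) + c = s + (c+1) := by omega
        rw [this]; exact hncov
      obtain ⟨z, hz1, hz2⟩ := ih (s+1) (f + δ) hcov' hncov'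
      refine ⟨Fin.cons z₀ z, ?_, ?_⟩
      · intro i
        refine Fin.cases ?_ ?_ i
        · simpa using ⟨hz₀Q.1, hz₀Q.2⟩
        · intro i'
          have := hz1 i'
          simp only [Fin.cons_succ]
          exact ⟨this.1, lt_of_le_of_lt hfa (by linarith [this.2])⟩
      · intro i j hij
        have hjne : j ≠ 0 := by
          intro hj
          subst hj
          exact absurd hij (by simp [Fin.lt_iff_val_lt_val])
        obtain ⟨j', rfl⟩ := Fin.eq_succ_of_ne_zero hjne
        rcases Fin.eq_zero_or_eq_succ i with hi | ⟨i', rfl⟩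
        · subst hi
          simp only [Fin.cons_zero, Fin.cons_succ]
          have := (hz1 j').2
          linarith [hz₀lt]
        · simp only [Fin.cons_succ]
          exact hz2 i' j' (Fin.succ_lt_succ_iff.mp hij)

end Cover

open Finset in
theorem strategy_lower_bound (ε δ : ℝ) (L : ℕ) (hL : 2 ≤ L)
    (hε : 0 < ε) (hδ : 0 < δ) (h1 : 2 * ε < δ) (h2 : δ ≤ 1 / (L : ℝ))
    (N Y : ℕ) (hY : 0 < Y) (φ : Strategy N Y) (hpriv : IsPrivate ε δ L φ) :
    ⌈Real.logb 2 (δ / ε)⌉ + 2 * (L : ℤ) - 4 ≤ (N : ℤ) := by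
  classical
  set B : ℤ := ⌈Real.logb 2 (δ / ε)⌉ with hB
  have hL2 : (2:ℝ) ≤ (L:ℝ) := by exact_mod_cast hL
  have hδhalf : δ ≤ 1/2 :=
    le_trans h2 (one_div_le_one_div_of_le (by norm_num) hL2)
  have hδε2 : (2:ℝ) < δ/ε := by rw [lt_div_iff₀ hε]; linarith
  have hlogb : (1:ℝ) < Real.logb 2 (δ/ε) := by
    rw [Real.lt_logb_iff_rpow_lt (by norm_num) (by positivity)]
    rw [Real.rpow_one]; exact hδε2
  have hB2 : 2 ≤ B := by
    have : (1:ℤ) < B := Int.lt_ceil.mpr (by exact_mod_cast hlogb)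
    omega
  set b1 : ℕ := (B - 1).toNat with hb1
  have hb1' : (b1 : ℤ) = B - 1 := Int.toNat_of_nonneg (by omega)
  have hb1R : (b1 : ℝ) < Real.logb 2 (δ/ε) := by
    have hceil := Int.ceil_lt_add_one (Real.logb 2 (δ/ε))
    have hcast : ((b1:ℤ):ℝ) = (B:ℝ) - 1 := by
      rw [hb1']; push_cast; ring
    push_cast at hcast ⊢
    rw [hcast]
    rw [← hB] at hceil
    linarith
  have hpow : (2:ℝ)^b1 * ε < δ := by
    have hp : (2:ℝ)^(b1:ℕ) < δ/ε := by
      calc (2:ℝ)^(b1:ℕ) = (2:ℝ) ^ ((b1:ℕ):ℝ) := (Real.rpow_natCast 2 b1).symm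
      _ < 2 ^ Real.logb 2 (δ/ε) := (Real.rpow_lt_rpow_left_iff (by norm_num)).mpr hb1R
      _ = δ/ε := Real.rpow_logb (by norm_num) (by norm_num) (by positivity)
    rw [lt_div_iff₀ hε] at hp
    linarith
  obtain ⟨y₀⟩ : Nonempty (Fin Y) := ⟨⟨0, hY⟩⟩
  have hAcc := hpriv.1
  have hδ1 : δ ≤ 1 := by linarith
  -- window: find a point in [0,δ) whose query sequence has ≥ b1+1 queries in (0,δ)
  have hex : ∃ x ∈ Set.Ico (0:ℝ) δ,
      b1 + 1 ≤ (Finset.univ.filter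
        fun k => 0 < φ.queries x y₀ k ∧ φ.queries x y₀ k < δ).card := by
    by_contra hcon
    push_neg at hcon
    have hall : ∀ x ∈ Set.Ico (0:ℝ) δ, (Finset.univ.filter
        fun k => 0 < φ.queries x y₀ k ∧ φ.queries x y₀ k < δ).card ≤ b1 := by
      intro x hx
      have := hcon x hx
      omega
    have := φ.window_bound hAcc hε y₀ b1 0 δ le_rfl hδ1 hall
    linarith
  obtain ⟨xs, hxsmem, hxscnt⟩ := hex
  have hxs01 : xs ∈ Set.Ico (0:ℝ) 1 := ⟨hxsmem.1, by linarith [hxsmem.2]⟩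
  set qs : Fin N → ℝ := φ.queries xs y₀ with hqs
  set S : Set ℝ := φ.infoSet qs with hS
  have hqQ : qs ∈ φ.Q xs := ⟨y₀, rfl⟩
  have hcovL : L ≤ coverNumber δ S := hpriv.2 xs hxs01 qs hqQ
  have hncov : ¬ Coverable δ (L-1) S := by
    intro h
    have hmem : (L-1) ∈ {L' : ℕ | 0 < L' ∧ Coverable δ L' S} := ⟨by omega, h⟩
    have := Nat.sInf_le hmem
    have : coverNumber δ S ≤ L - 1 := this
    omega
  have hcov1 : Coverable δ 1 (S ∩ Set.Iic δ) := by
    apply coverable_single (u := 0)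
    intro x hx
    exact ⟨hx.1.1.1, by simpa using hx.2⟩
  have hncov' : ¬ Coverable δ (1 + (L-2)) S := by
    have he : 1 + (L-2) = L - 1 := by omega
    rw [he]; exact hncov
  obtain ⟨z, hz1, hz2⟩ := chain_exists h1 hε S (L-2) 1 δ hcov1 hncov'
  have hzS : ∀ i, z i ∈ S := fun i => (hz1 i).1
  have hzδ : ∀ i, δ < z i := fun i => (hz1 i).2
  have hz01 : ∀ i, z i ∈ Set.Ico (0:ℝ) 1 := fun i => (hzS i).1
  have hmono : ∀ i j, i < j → z i < z j := fun i j h => by linarith [hz2 i j h]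
  -- sandwich queries
  have hUp : ∀ j : Fin (L-2), ∃ k, z j.castSucc < qs k ∧ qs k ≤ z j.castSucc + ε := by
    intro j
    apply Strategy.exists_query_above hAcc hε (hzS j.castSucc)
    have hstep := hz2 j.castSucc j.succ (Fin.castSucc_lt_succ : j.castSucc < j.succ)
    have := (hz01 j.succ).2
    linarith
  have hLo : ∀ j : Fin (L-2), ∃ k, z j.succ - ε ≤ qs k ∧ qs k ≤ z j.succ := by
    intro j
    apply Strategy.exists_query_below hAcc hε (hzS j.succ)
    have := hzδ j.succ
    linarith
  set ψ : Fin (L-2) × Bool → Fin N :=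
    fun p => if p.2 then (hUp p.1).choose else (hLo p.1).choose with hψ
  have hvalT : ∀ p : Fin (L-2) × Bool, p.2 = true →
      z p.1.castSucc < qs (ψ p) ∧ qs (ψ p) ≤ z p.1.castSucc + ε := by
    intro p h2'
    simp only [hψ, h2', if_true]
    exact (hUp p.1).choose_spec
  have hvalF : ∀ p : Fin (L-2) × Bool, p.2 = false →
      z p.1.succ - ε ≤ qs (ψ p) ∧ qs (ψ p) ≤ z p.1.succ := by
    intro p h2'
    simp only [hψ, h2', Bool.false_eq_true, if_false]
    exact (hLo p.1).choose_spec
  have hsucclt : ∀ j : Fin (L-2), z j.castSucc + 2*ε < z j.succ :=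
    fun j => hz2 j.castSucc j.succ (Fin.castSucc_lt_succ : j.castSucc < j.succ)
  have hkey : ∀ p p' : Fin (L-2) × Bool,
      (p.1 < p'.1 ∨ (p.1 = p'.1 ∧ p.2 = true ∧ p'.2 = false)) →
      qs (ψ p) < qs (ψ p') := by
    intro p p' hpp
    rcases hpp with hlt | ⟨heq, ht, hf⟩
    · have hup : qs (ψ p) ≤ z p.1.succ := by
        cases hb : p.2
        · exact (hvalF p hb).2
        · have h := hvalT p hb
          have := hsucclt p.1
          linarith [h.2]
      have hdown : z p'.1.castSucc < qs (ψ p') := by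
        cases hb : p'.2
        · have h := hvalF p' hb
          have := hsucclt p'.1
          linarith [h.1]
        · exact (hvalT p' hb).1
      have hmid : z p.1.succ ≤ z p'.1.castSucc := by
        have hle : p.1.succ ≤ p'.1.castSucc := by
          rw [Fin.le_def]
          simp only [Fin.val_succ, Fin.coe_castSucc]
          exact hlt
        rcases eq_or_lt_of_le hle with he | hl
        · rw [he]
        · exact le_of_lt (hmono _ _ hl)
      linarith
    · have ha := (hvalT p ht).2
      have hb' := (hvalF p' hf).1
      have := hsucclt p.1
      rw [← heq] at hb'
      linarith
  have hinj : Set.InjOn ψ ((Finset.univ : Finset (Fin (L-2) × Bool)) : Set (Fin (L-2) × Bool)) := by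
    intro p _ p' _ heq
    by_contra hne
    have hvals : qs (ψ p) = qs (ψ p') := by rw [heq]
    rcases lt_trichotomy p.1 p'.1 with h | h | h
    · exact absurd hvals (ne_of_lt (hkey p p' (Or.inl h)))
    · cases hb2 : p.2 <;> cases hb2' : p'.2
      · exact hne (Prod.ext h (by rw [hb2, hb2']))
      · exact absurd hvals.symm (ne_of_lt (hkey p' p (Or.inr ⟨h.symm, hb2', hb2⟩)))
      · exact absurd hvals (ne_of_lt (hkey p p' (Or.inr ⟨h, hb2, hb2'⟩)))
      · exact hne (Prod.ext h (by rw [hb2, hb2']))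
    · exact absurd hvals.symm (ne_of_lt (hkey p' p (Or.inl h)))
  set F1 : Finset (Fin N) :=
    Finset.univ.filter (fun k => 0 < qs k ∧ qs k < δ) with hF1
  set F2 : Finset (Fin N) :=
    Finset.univ.filter (fun k => δ ≤ qs k) with hF2
  have hmem2 : ∀ p ∈ (Finset.univ : Finset (Fin (L-2) × Bool)), ψ p ∈ F2 := by
    intro p _
    refine Finset.mem_filter.mpr ⟨Finset.mem_univ _, ?_⟩
    cases hb : p.2
    · have h := hvalF p hb
      have h0 : z 0 + 2*ε < z p.1.succ := hz2 0 p.1.succ (Fin.succ_pos p.1)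
      have hδ0 : δ < z 0 := hzδ 0
      linarith [h.1]
    · have h := hvalT p hb
      have hδ0 : δ < z p.1.castSucc := hzδ _
      linarith [h.1]
  have hcard2 : (L-2)*2 ≤ F2.card := by
    have := Finset.card_le_card_of_injOn ψ hmem2 hinj
    simpa [Finset.card_univ] using this
  have hdisj : Disjoint F1 F2 := by
    rw [Finset.disjoint_left]
    intro k hk1 hk2
    have h1' := (Finset.mem_filter.mp hk1).2.2
    have h2' := (Finset.mem_filter.mp hk2).2
    linarith
  have htot : F1.card + F2.card ≤ N := by
    calc F1.card + F2.card = (F1 ∪ F2).card := (Finset.card_union_of_disjoint hdisj).symm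
    _ ≤ (Finset.univ : Finset (Fin N)).card := Finset.card_le_card (Finset.subset_univ _)
    _ = N := by simp
  have hc1 : b1 + 1 ≤ F1.card := hxscnt
  have hfin : b1 + 1 + (L-2)*2 ≤ N := by omega
  have hfinz : (b1 : ℤ) + 1 + ((L:ℤ)-2)*2 ≤ (N:ℤ) := by
    have : ((L-2:ℕ):ℤ) = (L:ℤ) - 2 := by omega
    push_cast at hfin ⊢
    omega
  omega

section Grid

noncomputable def gridStrategy (M : ℕ) : Strategy M 1 where
  query k _ _ := ((k:ℕ)+1)/((M:ℝ)+1)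
  estimate r _ := (((Finset.univ.filter fun k => r k = true).card : ℝ))/((M:ℝ)+1)
  query_mem k _ _ := by
    constructor
    · positivity
    · rw [div_lt_one (by positivity)]
      have hk : ((k:ℕ):ℝ) < (M:ℝ) := by exact_mod_cast k.2
      linarith
  estimate_mem r _ := by
    constructor
    · positivity
    · rw [div_lt_one (by positivity)]
      have h : (Finset.univ.filter fun k => r k = true).card ≤ M := by
        have := Finset.card_le_card (Finset.subset_univ
          (Finset.univ.filter fun k => r k = true))
        simpa using this
      have : ((Finset.univ.filter fun k => r k = true).card : ℝ) ≤ (M:ℝ) := by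
        exact_mod_cast h
      linarith

lemma gridStrategy_queries (M : ℕ) (x : ℝ) (y : Fin 1) (k : Fin M) :
    (gridStrategy M).queries x y k = ((k:ℕ)+1)/((M:ℝ)+1) := rfl

lemma gridStrategy_resps (M : ℕ) (x : ℝ) (y : Fin 1) :
    ∀ (K : ℕ), K ≤ M → ∀ (i : Fin K),
      (gridStrategy M).resps x y K i = decide ((((i:ℕ):ℝ)+1)/((M:ℝ)+1) ≤ x) := by
  intro K
  induction K with
  | zero => intro _ i; exact i.elim0
  | succ K ih =>
      intro hK i
      rw [Strategy.resps_succ]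
      by_cases h : (i:ℕ) < K
      · rw [dif_pos h]
        exact ih (by omega) ⟨i, h⟩
      · have hiK : (i:ℕ) = K := by have := i.2; omega
        have hKM : K < M := by omega
        rw [dif_neg h, dif_pos hKM]
        show decide ((((K:ℕ):ℝ)+1)/((M:ℝ)+1) ≤ x) = _
        have hiKR : ((i:ℕ):ℝ) = ((K:ℕ):ℝ) := by exact_mod_cast hiK
        rw [hiKR]

lemma gridStrategy_card (M n : ℕ) (hn : n ≤ M) :
    (Finset.univ.filter fun k : Fin M => (k:ℕ) < n).card = n := by
  classical
  have heq : (Finset.univ.filter fun k : Fin M => (k:ℕ) < n)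
      = (Finset.univ : Finset (Fin n)).map (Fin.castLEEmb hn) := by
    ext k
    constructor
    · intro hk
      have hk' : (k:ℕ) < n := (Finset.mem_filter.mp hk).2
      exact Finset.mem_map.mpr ⟨⟨(k:ℕ), hk'⟩, Finset.mem_univ _, rfl⟩
    · intro hk
      obtain ⟨j, _, rfl⟩ := Finset.mem_map.mp hk
      refine Finset.mem_filter.mpr ⟨Finset.mem_univ _, ?_⟩
      simpa using j.2
  rw [heq, Finset.card_map]
  simp

lemma gridStrategy_accurate {ε : ℝ} (hε : 0 < ε) (M : ℕ) (hM : 2/ε ≤ (M:ℝ)+1) :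
    (gridStrategy M).Accurate ε := by
  classical
  intro x hx y
  have hM1 : (0:ℝ) < (M:ℝ)+1 := by positivity
  have hxM : (0:ℝ) ≤ x * ((M:ℝ)+1) := mul_nonneg hx.1 hM1.le
  set n : ℕ := ⌊x * ((M:ℝ)+1)⌋₊ with hn
  have hnle : (n:ℝ) ≤ x * ((M:ℝ)+1) := Nat.floor_le hxM
  have hnlt : x * ((M:ℝ)+1) < (n:ℝ) + 1 := Nat.lt_floor_add_one _
  have hnM : n ≤ M := by
    have hlt : x * ((M:ℝ)+1) < (M:ℝ)+1 := by nlinarith [hx.2]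
    have h2 : x * ((M:ℝ)+1) < ((M+1 : ℕ):ℝ) := by push_cast; linarith
    have := (Nat.floor_lt hxM).mpr h2
    omega
  have hcards : (Finset.univ.filter fun k : Fin M =>
      (gridStrategy M).resps x y M k = true).card = n := by
    have hfe : (Finset.univ.filter fun k : Fin M =>
        (gridStrategy M).resps x y M k = true)
        = Finset.univ.filter fun k : Fin M => (k:ℕ) < n := by
      apply Finset.filter_congr
      intro k _
      rw [gridStrategy_resps M x y M le_rfl k]
      simp only [decide_eq_true_eq]
      rw [div_le_iff₀ hM1]
      constructor
      · intro h
        have h1 : ((k:ℕ)+1 : ℕ) ≤ n := Nat.le_floor (by push_cast; linarith)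
        omega
      · intro h
        have h1 : ((k:ℕ)+1 : ℕ) ≤ n := h
        have h2 : (((k:ℕ)+1 : ℕ):ℝ) ≤ (n:ℝ) := by exact_mod_cast h1
        push_cast at h2
        linarith
    rw [hfe]
    exact gridStrategy_card M n hnM
  have hest : (gridStrategy M).estim x y = (n:ℝ)/((M:ℝ)+1) := by
    show (((Finset.univ.filter fun k : Fin M =>
      (gridStrategy M).resps x y M k = true).card : ℝ))/((M:ℝ)+1) = _
    rw [hcards]
  have hεM : (2:ℝ) ≤ ε * ((M:ℝ)+1) := by
    rw [div_le_iff₀ hε] at hM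
    nlinarith
  have heM : ((n:ℝ)/((M:ℝ)+1)) * ((M:ℝ)+1) = (n:ℝ) :=
    div_mul_cancel₀ _ (ne_of_gt hM1)
  rw [hest, abs_le]
  constructor
  · nlinarith
  · nlinarith

end Grid

section GridPriv

lemma coverNumber_Ico_ge {δ : ℝ} (hδ : 0 < δ) (L : ℕ) (hLδ : (L:ℝ) * δ ≤ 1) :
    L ≤ coverNumber δ (Set.Ico (0:ℝ) 1) := by
  classical
  apply le_csInf
  · refine ⟨⌈1/δ⌉₊, ?_, ?_⟩
    · have : (0:ℝ) < 1/δ := by positivity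
      exact Nat.ceil_pos.mpr this
    · refine ⟨fun j => (j:ℕ) * δ, fun j => (j:ℕ) * δ + δ, fun j => by simp, ?_⟩
      intro x hx
      have hx0 : (0:ℝ) ≤ x := hx.1
      have hxδ : (0:ℝ) ≤ x / δ := by positivity
      have hjlt : ⌊x/δ⌋₊ < ⌈1/δ⌉₊ := by
        have h1 : x/δ < 1/δ := by
          gcongr
          exact hx.2
        have h2 : (1:ℝ)/δ ≤ (⌈1/δ⌉₊:ℝ) := Nat.le_ceil _
        exact (Nat.floor_lt hxδ).mpr (by linarith)
      refine Set.mem_iUnion.mpr ⟨⟨⌊x/δ⌋₊, hjlt⟩, ?_, ?_⟩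
      · have := Nat.floor_le hxδ
        calc ((⌊x/δ⌋₊ : ℕ):ℝ) * δ ≤ (x/δ) * δ := by nlinarith
        _ = x := div_mul_cancel₀ _ (ne_of_gt hδ)
      · have h2 : x/δ < (⌊x/δ⌋₊ : ℝ) + 1 := Nat.lt_floor_add_one _
        have h3 : x = (x/δ) * δ := (div_mul_cancel₀ _ (ne_of_gt hδ)).symm
        nlinarith
  · rintro c ⟨hc, a, b, hab, hsub⟩
    have hvol : MeasureTheory.volume (Set.Ico (0:ℝ) 1) ≤
        MeasureTheory.volume (⋃ j, Set.Icc (a j) (b j)) :=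
      MeasureTheory.measure_mono hsub
    have hvol2 : MeasureTheory.volume (⋃ j : Fin c, Set.Icc (a j) (b j)) ≤
        ∑ j : Fin c, MeasureTheory.volume (Set.Icc (a j) (b j)) :=
      MeasureTheory.measure_iUnion_fintype_le _ _
    have hvol3 : ∑ j : Fin c, MeasureTheory.volume (Set.Icc (a j) (b j)) ≤
        ∑ _j : Fin c, ENNReal.ofReal δ := by
      apply Finset.sum_le_sum
      intro j _
      rw [Real.volume_Icc]
      exact ENNReal.ofReal_le_ofReal (hab j)
    have hvol4 : (∑ _j : Fin c, ENNReal.ofReal δ) = (c : ℕ) * ENNReal.ofReal δ := by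
      rw [Finset.sum_const]
      simp [nsmul_eq_mul]
    have hico : MeasureTheory.volume (Set.Ico (0:ℝ) 1) = ENNReal.ofReal 1 := by
      rw [Real.volume_Ico]; norm_num
    have hchain : ENNReal.ofReal 1 ≤ ((c:ℕ) : ENNReal) * ENNReal.ofReal δ := by
      rw [← hico, ← hvol4]
      exact le_trans hvol (le_trans hvol2 hvol3)
    have hcast : ((c:ℕ) : ENNReal) * ENNReal.ofReal δ = ENNReal.ofReal ((c:ℕ) * δ) := by
      rw [ENNReal.ofReal_mul (by positivity)]
      congr 1
      exact (ENNReal.ofReal_natCast c).symm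
    rw [hcast] at hchain
    have h1cδ : (1:ℝ) ≤ (c:ℕ) * δ := by
      have := (ENNReal.ofReal_le_ofReal_iff (by positivity)).mp hchain
      linarith
    by_contra hLc
    push_neg at hLc
    have : ((c:ℕ):ℝ) + 1 ≤ (L:ℝ) := by exact_mod_cast hLc
    nlinarith

lemma gridStrategy_private (ε δ : ℝ) (L : ℕ)
    (hε : 0 < ε) (hδ : 0 < δ) (hL0 : 0 < L) (h2 : δ ≤ 1 / (L : ℝ)) (M : ℕ)
    (hM : 2/ε ≤ (M:ℝ)+1) :
    IsPrivate ε δ L (gridStrategy M) := by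
  constructor
  · exact gridStrategy_accurate hε M hM
  · intro x hx q hq
    have hqeq : q = fun k : Fin M => (((k:ℕ):ℝ)+1)/((M:ℝ)+1) := by
      obtain ⟨y, hy⟩ := hq
      rw [← hy]
      funext k
      exact gridStrategy_queries M x y k
    have hinfo : (gridStrategy M).infoSet q = Set.Ico (0:ℝ) 1 := by
      ext w
      constructor
      · intro hw; exact hw.1
      · intro hw
        refine ⟨hw, ⟨(0 : Fin 1), ?_⟩⟩
        rw [hqeq]
        funext k
        exact gridStrategy_queries M w 0 k
    rw [hinfo]
    apply coverNumber_Ico_ge hδ L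
    have hLR : (0:ℝ) < (L:ℝ) := by exact_mod_cast hL0
    have h3 := mul_le_mul_of_nonneg_left h2 hLR.le
    rw [mul_one_div_cancel (ne_of_gt hLR)] at h3
    exact h3

end GridPriv


/-- lower bound `N*(ε,δ,L) ≥ ⌈log₂(δ/ε)⌉ + 2L − 4`; indeed every
`(ε,δ,L)`-private strategy (with nonempty seed space) of length `N` satisfies this. -/
theorem private_learning_lower_bound (ε δ : ℝ) (L : ℕ) (hL : 2 ≤ L)
    (hε : 0 < ε) (hδ : 0 < δ) (h1 : 2 * ε < δ) (h2 : δ ≤ 1 / (L : ℝ)) :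
    ⌈Real.logb 2 (δ / ε)⌉ + 2 * (L : ℤ) - 4 ≤ (Nstar ε δ L : ℤ) ∧
    ∀ (N Y : ℕ), 0 < Y → ∀ φ : Strategy N Y, IsPrivate ε δ L φ →
      ⌈Real.logb 2 (δ / ε)⌉ + 2 * (L : ℤ) - 4 ≤ (N : ℤ) := by
  have hmain : ∀ (N Y : ℕ), 0 < Y → ∀ φ : Strategy N Y, IsPrivate ε δ L φ →
      ⌈Real.logb 2 (δ / ε)⌉ + 2 * (L : ℤ) - 4 ≤ (N : ℤ) := by
    intro N Y hY φ hpriv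
    exact strategy_lower_bound ε δ L hL hε hδ h1 h2 N Y hY φ hpriv
  refine ⟨?_, hmain⟩
  have hMle : 2/ε ≤ ((⌈2/ε⌉₊ : ℕ):ℝ)+1 := by
    have := Nat.le_ceil (2/ε)
    linarith
  have hpriv := gridStrategy_private ε δ L hε hδ (by omega) h2 ⌈2/ε⌉₊ hMle
  have hne : {N : ℕ | ∃ Y : ℕ, 0 < Y ∧ ∃ φ : Strategy N Y, IsPrivate ε δ L φ}.Nonempty :=
    ⟨⌈2/ε⌉₊, 1, one_pos, gridStrategy ⌈2/ε⌉₊, hpriv⟩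
  have hmem : Nstar ε δ L ∈
      {N : ℕ | ∃ Y : ℕ, 0 < Y ∧ ∃ φ : Strategy N Y, IsPrivate ε δ L φ} :=
    Nat.sInf_mem hne
  obtain ⟨Y, hY, φ, hφ⟩ := hmem
  exact hmain _ Y hY φ hφ
end

section
/- Let ε > 0 with 2ε < 1/2. Then ⌈log(1/ε)⌉ ≤ N*(ε, 1/2, 2) ≤ ⌈log(1/ε)⌉ + 4. -/
open Set

namespace PrivProof

/-! ### Generic lemmas about strategies -/

lemma resps_spec {N Y : ℕ} (φ : Strategy N Y) (x : ℝ) (y : Fin Y) :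
    ∀ (j v : ℕ) (hvj : v < j) (hvN : v < N),
      φ.resps x y j ⟨v, hvj⟩ = decide (φ.queries x y ⟨v, hvN⟩ ≤ x) := by
  intro j
  induction j with
  | zero => intro v hvj hvN; exact absurd hvj (Nat.not_lt_zero v)
  | succ k ih =>
    intro v hvj hvN
    simp only [Strategy.resps]
    by_cases hvk : v < k
    · rw [dif_pos hvk]
      exact ih v hvk hvN
    · have hv : v = k := by omega
      subst hv
      rw [dif_neg (lt_irrefl v), dif_pos hvN]
      rfl

/-! ### Dyadic interval machinery -/

noncomputable def step (p : ℝ × ℝ) (b : Bool) : ℝ × ℝ :=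
  if b then ((p.1 + p.2) / 2, p.2) else (p.1, (p.1 + p.2) / 2)

noncomputable def ivl (p : ℝ × ℝ) (l : List Bool) : ℝ × ℝ := l.foldl step p

noncomputable def mid (p : ℝ × ℝ) : ℝ := (p.1 + p.2) / 2

def Good (p : ℝ × ℝ) : Prop := 0 ≤ p.1 ∧ p.1 < p.2 ∧ p.2 ≤ 1

lemma good_step {p : ℝ × ℝ} (h : Good p) (b : Bool) : Good (step p b) := by
  obtain ⟨h1, h2, h3⟩ := h
  cases b <;> simp only [step, Bool.false_eq_true, if_false, if_true] <;>
    exact ⟨by linarith, by linarith, by linarith⟩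

lemma good_ivl {p : ℝ × ℝ} (l : List Bool) (h : Good p) : Good (ivl p l) := by
  induction l generalizing p with
  | nil => exact h
  | cons b t ih => exact ih (good_step h b)

lemma ivl_concat (p : ℝ × ℝ) (l : List Bool) (b : Bool) :
    ivl p (l ++ [b]) = step (ivl p l) b := by
  simp [ivl, List.foldl_append]

lemma width_step (p : ℝ × ℝ) (b : Bool) :
    (step p b).2 - (step p b).1 = (p.2 - p.1) / 2 := by
  cases b <;> simp [step] <;> ring

lemma width_ivl (p : ℝ × ℝ) (l : List Bool) :
    (ivl p l).2 - (ivl p l).1 = (p.2 - p.1) / 2 ^ l.length := by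
  induction l generalizing p with
  | nil => simp [ivl]
  | cons b t ih =>
    have h : ivl p (b :: t) = ivl (step p b) t := rfl
    rw [h, ih, width_step, List.length_cons, pow_succ]
    ring

lemma mem_step {x : ℝ} {p : ℝ × ℝ} (hx : x ∈ Set.Ico p.1 p.2) :
    x ∈ Set.Ico (step p (decide (mid p ≤ x))).1 (step p (decide (mid p ≤ x))).2 := by
  obtain ⟨h1, h2⟩ := hx
  by_cases h : mid p ≤ x
  · simp only [step, h, decide_eq_true_eq, if_pos]
    exact ⟨h, h2⟩
  · have hd : decide (mid p ≤ x) = false := by simpa using h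
    rw [hd]
    simp only [step, Bool.false_eq_true, if_false]
    exact ⟨h1, by push_neg at h; exact h⟩

lemma mid_mem {p : ℝ × ℝ} (h : Good p) : mid p ∈ Set.Ico (0:ℝ) 1 := by
  obtain ⟨h1, h2, h3⟩ := h
  exact ⟨by unfold mid; linarith, by unfold mid; linarith⟩

lemma mid_close {x : ℝ} {p : ℝ × ℝ} (hx : x ∈ Set.Ico p.1 p.2) :
    |mid p - x| ≤ (p.2 - p.1) / 2 := by
  obtain ⟨h1, h2⟩ := hx
  rw [abs_le]
  exact ⟨by unfold mid; linarith, by unfold mid; linarith⟩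

/-! ### The strategy -/

def extb {k : ℕ} (h : Fin k → Bool) : ℕ → Bool :=
  fun i => if hi : i < k then h ⟨i, hi⟩ else false

def eqv (N : ℕ) : (Fin N → Bool) ≃ Fin (2 ^ N) :=
  (Equiv.arrowCongr (Equiv.refl (Fin N)) finTwoEquiv.symm).trans finFunctionFinEquiv

def decs {N : ℕ} (y : Fin (2 ^ N)) : ℕ → Bool := extb ((eqv N).symm y)

lemma decs_eqv {N : ℕ} (r : Fin N → Bool) : decs (eqv N r) = extb r := by
  unfold decs
  rw [Equiv.symm_apply_apply]

def luckyb (g : ℕ → Bool) : Bool := !g 0 || (g 1 && !g 2)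

noncomputable def reg3 (η : ℝ) (g : ℕ → Bool) : ℝ × ℝ :=
  if g 0 = false then (0, η)
  else if g 1 && !g 2 then (1/2, 1/2 + η)
  else if g 1 = false then (η, 1/2)
  else (1/2 + η, 1)

noncomputable def qcore (η : ℝ) (k : ℕ) (g : ℕ → Bool) : ℝ :=
  if k = 0 then η else if k = 1 then 1/2 else if k = 2 then 1/2 + η
  else mid (ivl (reg3 η g) (List.ofFn (fun i : Fin (k - 3) => g (i + 3))))

lemma qcore_ge3 (η : ℝ) {k : ℕ} (h3 : 3 ≤ k) (g : ℕ → Bool) :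
    qcore η k g = mid (ivl (reg3 η g) (List.ofFn (fun i : Fin (k - 3) => g (i + 3)))) := by
  unfold qcore
  rw [if_neg (by omega), if_neg (by omega), if_neg (by omega)]

lemma good_reg3 {η : ℝ} (hη : 0 < η) (hη' : η < 1/2) (g : ℕ → Bool) :
    Good (reg3 η g) := by
  unfold reg3 Good
  split
  · exact ⟨le_refl _, hη, by linarith⟩
  · split
    · exact ⟨by norm_num, by linarith, by linarith⟩
    · split
      · exact ⟨hη.le, by linarith, by norm_num⟩
      · exact ⟨by linarith, by linarith, le_refl _⟩

lemma reg3_congr (η : ℝ) {g g' : ℕ → Bool} (h0 : g 0 = g' 0) (h1 : g 1 = g' 1)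
    (h2 : g 2 = g' 2) : reg3 η g = reg3 η g' := by
  unfold reg3
  rw [h0, h1, h2]

lemma qcore_congr (η : ℝ) {k : ℕ} (h3 : 3 ≤ k) {g g' : ℕ → Bool}
    (hg : ∀ i < k, g i = g' i) : qcore η k g = qcore η k g' := by
  rw [qcore_ge3 η h3, qcore_ge3 η h3]
  have hr : reg3 η g = reg3 η g' :=
    reg3_congr η (hg 0 (by omega)) (hg 1 (by omega)) (hg 2 (by omega))
  have hl : (List.ofFn (fun i : Fin (k - 3) => g (i + 3))) =
      (List.ofFn (fun i : Fin (k - 3) => g' (i + 3))) := by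
    congr 1
    funext i
    exact hg (i + 3) (by omega)
  rw [hr, hl]

lemma qcore_mem {η : ℝ} (hη : 0 < η) (hη' : η < 1/2) (k : ℕ) (g : ℕ → Bool) :
    qcore η k g ∈ Set.Ico (0:ℝ) 1 := by
  unfold qcore
  split
  · exact ⟨hη.le, by linarith⟩
  · split
    · norm_num
    · split
      · constructor <;> [linarith; linarith]
      · exact mid_mem (good_ivl _ (good_reg3 hη hη' g))

/-- The lucky test for a point `x`. -/
noncomputable def Lx (η x : ℝ) : Bool :=
  !decide (η ≤ x) || (decide (1/2 ≤ x) && !decide (1/2 + η ≤ x))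

noncomputable def strat (η : ℝ) (hη : 0 < η) (hη' : η < 1/2) (N : ℕ) :
    Strategy N (2 ^ N) where
  query := fun k h y => qcore η k (if luckyb (extb h) then decs y else extb h)
  estimate := fun r _ =>
    if !(extb r 0) then η / 2
    else if extb r 1 && !extb r 2 then 1/2 + η / 2
    else mid (ivl (reg3 η (extb r)) (List.ofFn (fun i : Fin (N - 3) => extb r (i + 3))))
  query_mem := fun k h y => qcore_mem hη hη' _ _
  estimate_mem := fun r _ => by
    split
    · constructor <;> linarith
    · split
      · constructor <;> linarith
      · exact mid_mem (good_ivl _ (good_reg3 hη hη' _))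

end PrivProof

namespace PrivProof

section StratLemmas

variable (η : ℝ) (hη : 0 < η) (hη' : η < 1/2) (N : ℕ)

local notation "φ" => strat η hη hη' N

lemma strat_queries (x : ℝ) (y : Fin (2^N)) (v : ℕ) (hv : v < N) :
    (φ).queries x y ⟨v, hv⟩ =
      qcore η v (if luckyb (extb ((φ).resps x y v)) then decs y
        else extb ((φ).resps x y v)) := rfl

lemma extb_resps (x : ℝ) (y : Fin (2^N)) {k j : ℕ} (hjk : j < k) (hjN : j < N) :
    extb ((φ).resps x y k) j = decide ((φ).queries x y ⟨j, hjN⟩ ≤ x) := by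
  unfold extb
  rw [dif_pos hjk]
  exact resps_spec _ x y k j hjk hjN

lemma queries_zero (x : ℝ) (y : Fin (2^N)) (h0 : 0 < N) :
    (φ).queries x y ⟨0, h0⟩ = η := rfl

lemma queries_one (x : ℝ) (y : Fin (2^N)) (h1 : 1 < N) :
    (φ).queries x y ⟨1, h1⟩ = 1/2 := rfl

lemma queries_two (x : ℝ) (y : Fin (2^N)) (h2 : 2 < N) :
    (φ).queries x y ⟨2, h2⟩ = 1/2 + η := rfl

lemma extb_resps_zero (x : ℝ) (y : Fin (2^N)) {k : ℕ} (h : 0 < k) (hN : 0 < N) :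
    extb ((φ).resps x y k) 0 = decide (η ≤ x) := by
  rw [extb_resps η hη hη' N x y h hN, queries_zero]

lemma extb_resps_one (x : ℝ) (y : Fin (2^N)) {k : ℕ} (h : 1 < k) (hN : 1 < N) :
    extb ((φ).resps x y k) 1 = decide (1/2 ≤ x) := by
  rw [extb_resps η hη hη' N x y h hN, queries_one]

lemma extb_resps_two (x : ℝ) (y : Fin (2^N)) {k : ℕ} (h : 2 < k) (hN : 2 < N) :
    extb ((φ).resps x y k) 2 = decide (1/2 + η ≤ x) := by
  rw [extb_resps η hη hη' N x y h hN, queries_two]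

lemma lucky_resps (x : ℝ) (y : Fin (2^N)) {k : ℕ} (h3 : 3 ≤ k) (hN : 3 ≤ N) :
    luckyb (extb ((φ).resps x y k)) = Lx η x := by
  unfold luckyb Lx
  rw [extb_resps_zero η hη hη' N x y (by omega) (by omega),
    extb_resps_one η hη hη' N x y (by omega) (by omega),
    extb_resps_two η hη hη' N x y (by omega) (by omega)]

lemma queries_ge3 (x : ℝ) (y : Fin (2^N)) {v : ℕ} (h3 : 3 ≤ v) (hv : v < N) :
    (φ).queries x y ⟨v, hv⟩ =
      qcore η v (if Lx η x then decs y else extb ((φ).resps x y v)) := by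
  rw [strat_queries, lucky_resps η hη hη' N x y h3 (by omega)]

end StratLemmas

end PrivProof

namespace PrivProof

noncomputable def gbits (η : ℝ) (hη : 0 < η) (hη' : η < 1/2) (N : ℕ) (x : ℝ)
    (y : Fin (2^N)) : ℕ → Bool :=
  fun j => if h : j < N then decide ((strat η hη hη' N).queries x y ⟨j, h⟩ ≤ x) else false

section StratLemmas2

variable (η : ℝ) (hη : 0 < η) (hη' : η < 1/2) (N : ℕ)

local notation "φ" => strat η hη hη' N
local notation "G" x:max y:max => gbits η hη hη' N x y

lemma gbits_eq_extb (x : ℝ) (y : Fin (2^N)) {k j : ℕ} (hjk : j < k) (hjN : j < N) :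
    extb ((φ).resps x y k) j = (G x y) j := by
  rw [extb_resps η hη hη' N x y hjk hjN]
  unfold gbits
  rw [dif_pos hjN]

lemma gbits_zero (x : ℝ) (y : Fin (2^N)) (hN : 0 < N) :
    (G x y) 0 = decide (η ≤ x) := by
  unfold gbits; rw [dif_pos hN, queries_zero]

lemma gbits_one (x : ℝ) (y : Fin (2^N)) (hN : 1 < N) :
    (G x y) 1 = decide (1/2 ≤ x) := by
  unfold gbits; rw [dif_pos hN, queries_one]

lemma gbits_two (x : ℝ) (y : Fin (2^N)) (hN : 2 < N) :
    (G x y) 2 = decide (1/2 + η ≤ x) := by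
  unfold gbits; rw [dif_pos hN, queries_two]

lemma dev_region (x : ℝ) (y : Fin (2^N)) (hx : x ∈ Set.Ico (0:ℝ) 1)
    (hdev : Lx η x = false) (hN : 3 ≤ N) :
    x ∈ Set.Ico (reg3 η (G x y)).1 (reg3 η (G x y)).2 ∧
      (reg3 η (G x y)).2 - (reg3 η (G x y)).1 ≤ 1/2 := by
  have hg0 := gbits_zero η hη hη' N x y (by omega)
  have hg1 := gbits_one η hη hη' N x y (by omega)
  have hg2 := gbits_two η hη hη' N x y (by omega)
  by_cases h0 : η ≤ x
  · by_cases h1 : 1/2 ≤ x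
    · by_cases h2 : 1/2 + η ≤ x
      · have hr : reg3 η (G x y) = (1/2 + η, 1) := by
          unfold reg3; rw [hg0, hg1, hg2]; simp only [h0, h1, h2,
            decide_eq_true_eq, decide_eq_false_iff_not]
          rw [if_neg (by simp [h0]), if_neg (by simp [h2]), if_neg (by simp [h1])]
        rw [hr]
        exact ⟨⟨h2, hx.2⟩, by simp only []; linarith⟩
      · exfalso
        simp only [Lx, Bool.or_eq_false_iff, Bool.and_eq_false_iff,
          Bool.not_eq_false', Bool.not_eq_false, decide_eq_true_eq,
          decide_eq_false_iff_not] at hdev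
        rcases hdev.2 with hc | hc
        · exact hc h1
        · exact h2 hc
    · have hr : reg3 η (G x y) = (η, 1/2) := by
        unfold reg3
        rw [hg0, hg1, hg2]
        rw [if_neg (by simp [h0]), if_neg (by simp [h1]; intro hc; exfalso; exact h1 (by linarith)), if_pos (by simp; linarith [lt_of_not_ge h1])]
      rw [hr]
      exact ⟨⟨h0, lt_of_not_ge h1⟩, by simp only []; linarith⟩
  · exfalso; simp [Lx, h0] at hdev

lemma dev_invariant (x : ℝ) (y : Fin (2^N)) (hx : x ∈ Set.Ico (0:ℝ) 1)
    (hdev : Lx η x = false) (hN : 3 ≤ N) :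
    ∀ j, j + 3 ≤ N →
      x ∈ Set.Ico
        (ivl (reg3 η (G x y)) (List.ofFn (fun i : Fin j => (G x y) ((i:ℕ) + 3)))).1
        (ivl (reg3 η (G x y)) (List.ofFn (fun i : Fin j => (G x y) ((i:ℕ) + 3)))).2 := by
  intro j
  induction j with
  | zero =>
    intro _
    simpa [ivl] using (dev_region η hη hη' N x y hx hdev hN).1
  | succ j ih =>
    intro hj
    have hj' : j + 3 ≤ N := by omega
    have hjN : j + 3 < N := by omega
    -- the list grows by one bit
    have hsplit : (List.ofFn (fun i : Fin (j+1) => (G x y) ((i:ℕ) + 3))) =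
        (List.ofFn (fun i : Fin j => (G x y) ((i:ℕ) + 3))) ++ [(G x y) (j + 3)] := by
      rw [List.ofFn_succ']
      simp [Fin.coe_castSucc, Fin.val_last, List.concat_eq_append]
    -- identify the new bit
    have hbit : (G x y) (j + 3) =
        decide (mid (ivl (reg3 η (G x y))
          (List.ofFn (fun i : Fin j => (G x y) ((i:ℕ) + 3)))) ≤ x) := by
      have h1 : (G x y) (j + 3) = decide ((φ).queries x y ⟨j + 3, hjN⟩ ≤ x) := by
        unfold gbits; rw [dif_pos hjN]
      rw [h1, queries_ge3 η hη hη' N x y (by omega) hjN, hdev]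
      simp only [Bool.false_eq_true, if_false]
      have h2 : qcore η (j + 3) (extb ((φ).resps x y (j + 3))) =
          qcore η (j + 3) (G x y) :=
        qcore_congr η (by omega) (fun i hi => gbits_eq_extb η hη hη' N x y hi (by omega))
      rw [h2, qcore_ge3 η (by omega)]
      have h3 : (List.ofFn (fun i : Fin (j + 3 - 3) => (G x y) ((i:ℕ) + 3))) =
          (List.ofFn (fun i : Fin j => (G x y) ((i:ℕ) + 3))) := by
        congr 1 <;> simp
      rw [h3]
    rw [hsplit, ivl_concat, hbit]
    exact mem_step (ih hj')

end StratLemmas2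

end PrivProof

namespace PrivProof

section Accuracy

variable (η : ℝ) (hη : 0 < η) (hη' : η < 1/2) (N : ℕ)

local notation "φ" => strat η hη hη' N
local notation "G" x:max y:max => gbits η hη hη' N x y

lemma strat_estim (x : ℝ) (y : Fin (2^N)) :
    (φ).estim x y =
      (if !(extb ((φ).resps x y N) 0) then η / 2
      else if extb ((φ).resps x y N) 1 && !extb ((φ).resps x y N) 2 then 1/2 + η / 2
      else mid (ivl (reg3 η (extb ((φ).resps x y N)))
        (List.ofFn (fun i : Fin (N - 3) => extb ((φ).resps x y N) ((i:ℕ) + 3))))) := rfl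

theorem strat_accurate (ε : ℝ) (hN : 4 ≤ N) (hηε : η ≤ ε)
    (hfine : (1:ℝ) / 2 ^ (N - 3) ≤ ε) : (φ).Accurate ε := by
  intro x hx y
  have hN0 : 0 < N := by omega
  have hN1 : 1 < N := by omega
  have hN2 : 2 < N := by omega
  have he0 : extb ((φ).resps x y N) 0 = decide (η ≤ x) :=
    extb_resps_zero η hη hη' N x y hN0 hN0
  have he1 : extb ((φ).resps x y N) 1 = decide (1/2 ≤ x) :=
    extb_resps_one η hη hη' N x y hN1 hN1
  have he2 : extb ((φ).resps x y N) 2 = decide (1/2 + η ≤ x) :=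
    extb_resps_two η hη hη' N x y hN2 hN2
  rw [strat_estim, he0, he1, he2]
  by_cases h0 : η ≤ x
  · -- not the low lucky interval
    rw [if_neg (by simp [h0])]
    by_cases hlucky : 1/2 ≤ x ∧ x < 1/2 + η
    · -- high lucky interval
      rw [if_pos (by
        simp only [Bool.and_eq_true, Bool.not_eq_true', decide_eq_true_eq,
          decide_eq_false_iff_not]
        exact ⟨hlucky.1, not_le.mpr hlucky.2⟩)]
      rw [abs_le]
      constructor <;> linarith [hlucky.1, hlucky.2, hηε]
    · -- deviator
      have hdev : Lx η x = false := by
        simp only [Lx, Bool.or_eq_false_iff, Bool.and_eq_false_iff,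
          Bool.not_eq_false', Bool.not_eq_false, decide_eq_true_eq,
          decide_eq_false_iff_not]
        refine ⟨h0, ?_⟩
        by_cases h1 : 1/2 ≤ x
        · right; by_contra hc; exact hlucky ⟨h1, lt_of_not_ge hc⟩
        · left; exact h1
      have hcond : ¬(decide (1/2 ≤ x) && !decide (1/2 + η ≤ x)) = true := by
        simp only [Bool.and_eq_true, Bool.not_eq_true', decide_eq_true_eq,
          decide_eq_false_iff_not, not_and]
        intro h1 hc
        exact hlucky ⟨h1, lt_of_not_ge hc⟩
      rw [if_neg hcond]
      -- rewrite the history to gbits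
      have hreg : reg3 η (extb ((φ).resps x y N)) = reg3 η (G x y) :=
        reg3_congr η (gbits_eq_extb η hη hη' N x y hN0 hN0)
          (gbits_eq_extb η hη hη' N x y hN1 hN1)
          (gbits_eq_extb η hη hη' N x y hN2 hN2)
      have hlist : (List.ofFn (fun i : Fin (N - 3) => extb ((φ).resps x y N) ((i:ℕ) + 3))) =
          (List.ofFn (fun i : Fin (N - 3) => (G x y) ((i:ℕ) + 3))) := by
        congr 1
        funext i
        exact gbits_eq_extb η hη hη' N x y (by omega) (by omega)
      rw [hreg, hlist]
      -- apply the invariant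
      have hinv := dev_invariant η hη hη' N x y hx hdev (by omega) (N - 3) (by omega)
      have hwidth := width_ivl (reg3 η (G x y))
        (List.ofFn (fun i : Fin (N - 3) => (G x y) ((i:ℕ) + 3)))
      rw [List.length_ofFn] at hwidth
      have hrw := (dev_region η hη hη' N x y hx hdev (by omega)).2
      have hclose := mid_close hinv
      rw [hwidth] at hclose
      have hp : (0:ℝ) < 2 ^ (N - 3) := by positivity
      have hWle : ((reg3 η (G x y)).2 - (reg3 η (G x y)).1) / 2 ^ (N - 3) ≤
          1 / 2 ^ (N - 3) := (div_le_div_iff_of_pos_right hp).mpr (by linarith)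
      linarith [hclose, hWle, hfine]
  · -- low lucky interval
    rw [if_pos (by simp [h0])]
    have hx0 := hx.1
    have hxη : x < η := lt_of_not_ge h0
    rw [abs_le]
    constructor <;> [linarith; linarith]

end Accuracy

end PrivProof

namespace PrivProof

section Privacy

variable (η : ℝ) (hη : 0 < η) (hη' : η < 1/2) (N : ℕ)

local notation "φ" => strat η hη hη' N
local notation "G" x:max y:max => gbits η hη hη' N x y

lemma queries_lucky_eq (x x' : ℝ) (y₀ : Fin (2^N)) (hN : 4 ≤ N)
    (hx' : Lx η x' = true) :
    (φ).queries x' (if Lx η x then y₀ else eqv N ((φ).resps x y₀ N)) =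
      (φ).queries x y₀ := by
  funext k
  rcases k with ⟨v, hv⟩
  rcases Nat.lt_or_ge v 3 with h3 | h3
  · interval_cases v
    · rw [queries_zero, queries_zero]
    · rw [queries_one, queries_one]
    · rw [queries_two, queries_two]
  · rw [queries_ge3 η hη hη' N x' _ h3 hv, queries_ge3 η hη hη' N x y₀ h3 hv, hx']
    simp only [if_true]
    by_cases hLx : Lx η x
    · rw [hLx]
      simp only [if_true, if_pos]
    · have hLxf : Lx η x = false := by simpa using hLx
      rw [hLxf]
      simp only [Bool.false_eq_true, if_false]
      rw [decs_eqv]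
      apply qcore_congr η h3
      intro i hi
      rw [gbits_eq_extb η hη hη' N x y₀ (show i < N by omega) (by omega),
        gbits_eq_extb η hη hη' N x y₀ (show i < v by omega) (by omega)]

theorem strat_privacy (hN : 4 ≤ N) :
    ∀ x ∈ Set.Ico (0:ℝ) 1, ∀ q ∈ (φ).Q x,
      2 ≤ coverNumber (1/2) ((φ).infoSet q) := by
  rintro x hx q ⟨y₀, rfl⟩
  have hL0 : Lx η (0:ℝ) = true := by
    unfold Lx
    rw [decide_eq_false (not_le.mpr hη)]
    simp
  have hLh : Lx η (1/2 + η/2) = true := by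
    unfold Lx
    rw [decide_eq_true (show (1:ℝ)/2 ≤ 1/2 + η/2 by linarith),
      decide_eq_false (not_le.mpr (show (1:ℝ)/2 + η/2 < 1/2 + η by linarith))]
    simp
  have mem0 : (0:ℝ) ∈ (φ).infoSet ((φ).queries x y₀) :=
    ⟨⟨le_refl 0, by norm_num⟩, ⟨_, queries_lucky_eq η hη hη' N x 0 y₀ hN hL0⟩⟩
  have memh : (1/2 + η/2 : ℝ) ∈ (φ).infoSet ((φ).queries x y₀) :=
    ⟨⟨by linarith, by linarith⟩, ⟨_, queries_lucky_eq η hη hη' N x _ y₀ hN hLh⟩⟩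
  set E := (φ).infoSet ((φ).queries x y₀) with hE
  have cover2 : Coverable (1/2) 2 E := by
    refine ⟨![0, 1/2], ![1/2, 1], ?_, ?_⟩
    · intro j; fin_cases j <;> norm_num
    · intro z hz
      have hzI : z ∈ Set.Ico (0:ℝ) 1 := hz.1
      rw [Set.mem_iUnion]
      rcases lt_or_ge z (1/2) with hz2 | hz2
      · exact ⟨0, by simp [Set.mem_Icc]; constructor <;> [exact hzI.1; linarith]⟩
      · exact ⟨1, by simp [Set.mem_Icc]; constructor <;> [linarith; linarith [hzI.2]]⟩
  have not1 : ¬ Coverable (1/2) 1 E := by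
    rintro ⟨a, b, hab, hsub⟩
    have h0 := hsub mem0
    have hh := hsub memh
    rw [Set.mem_iUnion] at h0 hh
    obtain ⟨j0, hj0⟩ := h0
    obtain ⟨j1, hj1⟩ := hh
    have e0 : j0 = 0 := Subsingleton.elim _ _
    have e1 : j1 = 0 := Subsingleton.elim _ _
    subst e0; subst e1
    have := hab 0
    have h1 := hj0.1
    have h2 := hj1.2
    simp only [Set.mem_Icc] at hj0 hj1
    linarith [hj0.1, hj1.2]
  have hne : ({L : ℕ | 0 < L ∧ Coverable (1/2) L E}).Nonempty := ⟨2, two_pos, cover2⟩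
  have hmem := Nat.sInf_mem hne
  unfold coverNumber
  by_contra hlt
  push_neg at hlt
  have h1 : sInf {L : ℕ | 0 < L ∧ Coverable (1/2) L E} = 1 := by
    have := hmem.1
    omega
  exact not1 (by have h2 := hmem.2; rw [h1] at h2; exact h2)

end Privacy

end PrivProof

namespace PrivProof

lemma acc_lower {n Y : ℕ} (hY : 0 < Y) {ε : ℝ} (hε : 0 < ε) (φ : Strategy n Y)
    (hacc : φ.Accurate ε) (hlt : (2:ℝ)^n * ε < 1) : False := by
  have hpow : (0:ℝ) < 2^n := by positivity
  set d : ℝ := (1 + (2:ℝ)^n * ε) / (2 * 2^n) with hd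
  have hεd : ε < d := by
    rw [hd, lt_div_iff₀ (by positivity)]
    nlinarith
  have hd0 : 0 < d := hε.trans hεd
  have hdK : (2:ℝ)^n * d < 1 := by
    rw [hd]
    have h : (2:ℝ)^n * ((1 + 2^n*ε)/(2*2^n)) = (1 + 2^n*ε)/2 := by
      field_simp
    rw [h]
    linarith
  set y₀ : Fin Y := ⟨0, hY⟩
  have hxm : ∀ i : Fin (2^n+1), ((i:ℕ):ℝ) * d ∈ Set.Ico (0:ℝ) 1 := by
    intro i
    constructor
    · positivity
    · have hi : ((i:ℕ):ℝ) ≤ (2:ℝ)^n := by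
        have h2 := Nat.lt_succ_iff.mp i.2
        exact_mod_cast h2
      calc ((i:ℕ):ℝ)*d ≤ 2^n * d := mul_le_mul_of_nonneg_right hi hd0.le
        _ < 1 := hdK
  obtain ⟨i, j, hij, hfij⟩ := Fintype.exists_ne_map_eq_of_card_lt
    (fun i : Fin (2^n+1) => φ.resps (((i:ℕ):ℝ)*d) y₀ n)
    (by simp [Fintype.card_fun])
  have hfij' : φ.resps (((i:ℕ):ℝ)*d) y₀ n = φ.resps (((j:ℕ):ℝ)*d) y₀ n := hfij
  have h1 := hacc _ (hxm i) y₀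
  have h2 := hacc _ (hxm j) y₀
  have heq : φ.estim (((i:ℕ):ℝ)*d) y₀ = φ.estim (((j:ℕ):ℝ)*d) y₀ := by
    unfold Strategy.estim
    rw [hfij']
  have hij1 : (1:ℝ) ≤ |((i:ℕ):ℝ) - ((j:ℕ):ℝ)| := by
    have hne : ((i:ℕ):ℤ) ≠ ((j:ℕ):ℤ) := by
      intro hc
      exact hij (Fin.ext (by exact_mod_cast hc))
    have h3 := Int.one_le_abs (sub_ne_zero.mpr hne)
    exact_mod_cast h3
  have hdist : |((i:ℕ):ℝ)*d - ((j:ℕ):ℝ)*d| ≤ ε := by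
    have ht := abs_sub_le (((i:ℕ):ℝ)*d) (φ.estim (((i:ℕ):ℝ)*d) y₀) (((j:ℕ):ℝ)*d)
    have ha : |((i:ℕ):ℝ)*d - φ.estim (((i:ℕ):ℝ)*d) y₀| =
        |φ.estim (((i:ℕ):ℝ)*d) y₀ - ((i:ℕ):ℝ)*d| := abs_sub_comm _ _
    have hb : |φ.estim (((i:ℕ):ℝ)*d) y₀ - ((j:ℕ):ℝ)*d| ≤ ε/2 := by
      rw [heq]; exact h2
    rw [ha] at ht
    linarith
  have h4 : |((i:ℕ):ℝ)*d - ((j:ℕ):ℝ)*d| = |((i:ℕ):ℝ) - ((j:ℕ):ℝ)| * d := by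
    rw [← sub_mul, abs_mul, abs_of_pos hd0]
  rw [h4] at hdist
  nlinarith [mul_le_mul_of_nonneg_right hij1 hd0.le]

end PrivProof

open PrivProof in
theorem query_complexity_L_two' (ε : ℝ) (hε : 0 < ε) (h : 2 * ε < 1 / 2) :
    ⌈Real.logb 2 (1 / ε)⌉ ≤ (Nstar ε (1 / 2) 2 : ℤ) ∧
    (Nstar ε (1 / 2) 2 : ℤ) ≤ ⌈Real.logb 2 (1 / ε)⌉ + 4 := by
  set c := ⌈Real.logb 2 (1/ε)⌉ with hc
  have h1ε : (4:ℝ) < 1/ε := by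
    rw [lt_div_iff₀ hε]; linarith
  have hlog4 : Real.logb 2 4 = 2 := by
    rw [show (4:ℝ) = 2^(2:ℕ) by norm_num, Real.logb_pow, Real.logb_self_eq_one] <;> norm_num
  have hlogb : (2:ℝ) < Real.logb 2 (1/ε) := by
    have h0 := Real.logb_lt_logb (b := 2) (by norm_num) (show (0:ℝ) < 4 by norm_num) h1ε
    rw [hlog4] at h0
    exact h0
  have hc2 : (2:ℤ) < c := Int.lt_ceil.mpr (by exact_mod_cast hlogb)
  set M := c.toNat with hMdef
  have hMc : (M:ℤ) = c := Int.toNat_of_nonneg (by omega)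
  have hM3 : 3 ≤ M := by omega
  set η : ℝ := (1/2)^M with hηdef
  have hη : 0 < η := by positivity
  have hη' : η < 1/2 := by
    have h8 : ((1:ℝ)/2)^M ≤ (1/2)^3 := pow_le_pow_of_le_one (by norm_num) (by norm_num) hM3
    rw [hηdef]
    calc ((1:ℝ)/2)^M ≤ (1/2)^3 := h8
      _ < 1/2 := by norm_num
  have hlogleM : Real.logb 2 (1/ε) ≤ (M:ℝ) := by
    have h0 := Int.le_ceil (Real.logb 2 (1/ε))
    rw [← hc, ← hMc] at h0
    exact_mod_cast h0
  have h2M : 1/ε ≤ (2:ℝ)^M := by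
    have h0 : (1:ℝ)/ε = 2 ^ Real.logb 2 (1/ε) :=
      (Real.rpow_logb (by norm_num) (by norm_num) (by positivity)).symm
    rw [h0]
    calc (2:ℝ) ^ Real.logb 2 (1/ε) ≤ 2 ^ ((M:ℕ):ℝ) :=
        Real.rpow_le_rpow_of_exponent_le (by norm_num) hlogleM
      _ = 2 ^ M := Real.rpow_natCast 2 M
  have hp2M : (0:ℝ) < 2^M := by positivity
  have hηε : η ≤ ε := by
    have h1 : 1 ≤ ε * 2^M := by
      rw [div_le_iff₀ hε] at h2M
      linarith
    have h2 : η = 1/2^M := by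
      rw [hηdef, one_div, one_div, inv_pow]
    rw [h2, div_le_iff₀ hp2M]
    linarith
  have hfine : (1:ℝ) / 2 ^ (M + 4 - 3) ≤ ε := by
    have h0 : M + 4 - 3 = M + 1 := by omega
    rw [h0]
    have h1 : (2:ℝ)^(M+1) = 2 * 2^M := by ring
    rw [h1]
    have h2 : η = 1/2^M := by rw [hηdef, one_div, one_div, inv_pow]
    rw [div_le_iff₀ (by positivity)]
    have h3 : 1/2^M ≤ ε := h2 ▸ hηε
    rw [div_le_iff₀ hp2M] at h3
    nlinarith
  have hNmem : (M + 4) ∈ {N : ℕ | ∃ Y : ℕ, 0 < Y ∧ ∃ φ : Strategy N Y,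
      IsPrivate ε (1/2) 2 φ} := by
    refine ⟨2^(M+4), by positivity, strat η hη hη' (M+4), ?_, ?_⟩
    · exact strat_accurate η hη hη' (M+4) ε (by omega) hηε hfine
    · exact strat_privacy η hη hη' (M+4) (by omega)
  have hub : Nstar ε (1/2) 2 ≤ M + 4 := Nat.sInf_le hNmem
  have hmemN : Nstar ε (1/2) 2 ∈ {N : ℕ | ∃ Y : ℕ, 0 < Y ∧ ∃ φ : Strategy N Y,
      IsPrivate ε (1/2) 2 φ} := Nat.sInf_mem ⟨M + 4, hNmem⟩
  have hlb : c ≤ (Nstar ε (1/2) 2 : ℤ) := by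
    obtain ⟨Y, hY, φ, hacc, _⟩ := hmemN
    by_contra hcon
    push_neg at hcon
    have hlt : ((Nstar ε (1/2) 2 : ℤ):ℝ) < Real.logb 2 (1/ε) := by
      exact_mod_cast Int.lt_ceil.mp hcon
    have h2n : (2:ℝ)^(Nstar ε (1/2) 2) < 1/ε := by
      have h0 : (1:ℝ)/ε = 2 ^ Real.logb 2 (1/ε) :=
        (Real.rpow_logb (by norm_num) (by norm_num) (by positivity)).symm
      rw [h0]
      calc (2:ℝ)^(Nstar ε (1/2) 2) = 2 ^ ((Nstar ε (1/2) 2 : ℕ):ℝ) :=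
          (Real.rpow_natCast 2 _).symm
        _ < 2 ^ Real.logb 2 (1/ε) := by
          apply Real.rpow_lt_rpow_of_exponent_lt (by norm_num)
          exact_mod_cast hlt
    have hεn : (2:ℝ)^(Nstar ε (1/2) 2) * ε < 1 := by
      rw [lt_div_iff₀ hε] at h2n
      linarith
    exact acc_lower hY hε φ hacc hεn
  refine ⟨hlb, ?_⟩
  have : (Nstar ε (1/2) 2 : ℤ) ≤ (M:ℤ) + 4 := by exact_mod_cast hub
  omega

/-- for `L = 2` and `δ = 1/2`,
`⌈log₂(1/ε)⌉ ≤ N*(ε, 1/2, 2) ≤ ⌈log₂(1/ε)⌉ + 4`. -/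
theorem query_complexity_L_two (ε : ℝ) (hε : 0 < ε) (h : 2 * ε < 1 / 2) :
    ⌈Real.logb 2 (1 / ε)⌉ ≤ (Nstar ε (1 / 2) 2 : ℤ) ∧
    (Nstar ε (1 / 2) 2 : ℤ) ≤ ⌈Real.logb 2 (1 / ε)⌉ + 4 := by
  exact query_complexity_L_two' ε hε h
end
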